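/- arXiv:1705.00054 — 4 statements merged into one kernel-verified Lean document; each statement's English description precedes it below -/
import Mathlib

section
/- Measurable selection: Let Σ be an m-dimensional C¹ submanifold of ℝ^d, let B ⊂ Σ be an ℋ^m-measurable set, and let u : B → 𝒜_Q(ℝⁿ) be a measurable function (with respect to the Borel σ-algebra of the metric space (𝒜_Q(ℝⁿ), 𝒢)). Then there exist measurable functions u_1, ..., u_Q : B → ℝⁿ such that u(p) = ∑_{l=1}^Q ⟦u_l(p)⟧ for ℋ^m-almost every p ∈ B. -/
open scoped BigOperators
open Metric MeasureTheory Asymptotics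
open scoped Classical

noncomputable section

/-- `Euc n` is the Euclidean space `ℝⁿ`. -/
abbrev Euc (n : ℕ) : Type := EuclideanSpace ℝ (Fin n)

/-- Two `Q`-tuples of points are identified when they differ by a permutation of the indices. -/
def QPerm (α : Type*) (Q : ℕ) : Setoid (Fin Q → α) where
  r f g := ∃ σ : Equiv.Perm (Fin Q), f = g ∘ σ
  iseqv := by
    refine ⟨fun f => ⟨Equiv.refl _, rfl⟩, ?_, ?_⟩
    · rintro f g ⟨σ, rfl⟩
      exact ⟨σ.symm, by ext i; simp⟩
    · rintro f g h ⟨σ, rfl⟩ ⟨ρ, rfl⟩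
      exact ⟨σ.trans ρ, by ext i; simp⟩

/-- The space `𝒜_Q(α)` of `Q`-points of `α`: unordered `Q`-tuples of points of `α`. -/
abbrev AQ (α : Type*) (Q : ℕ) : Type _ := Quotient (QPerm α Q)

/-- The `Q`-point `∑_l ⟦f l⟧`. -/
def AQmk {α : Type*} {Q : ℕ} (f : Fin Q → α) : AQ α Q := Quotient.mk (QPerm α Q) f

/-- `𝒢` computed on representatives: `min_{σ ∈ 𝒫_Q} (∑_l ‖v_l - w_{σ(l)}‖²)^{1/2}`. -/
def Gfun {α : Type*} [NormedAddCommGroup α] {Q : ℕ} (f g : Fin Q → α) : ℝ :=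
  ⨅ σ : Equiv.Perm (Fin Q), Real.sqrt (∑ l, ‖f l - g (σ l)‖ ^ 2)

/-- The metric `𝒢` on `𝒜_Q(α)`; it is computed on (arbitrary) representatives, which is
well posed since `Gfun` is invariant under permutations of either argument. -/
def Gdist {α : Type*} [NormedAddCommGroup α] {Q : ℕ} (T₁ T₂ : AQ α Q) : ℝ :=
  Gfun T₁.out T₂.out

/-- The multiplicity `Θ_T(v)` of the value `v` in the `Q`-point `T`. -/
def Theta {α : Type*} {Q : ℕ} (T : AQ α Q) (v : α) : ℕ :=
  {l : Fin Q | T.out l = v}.ncard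

/-- The support `spt(T) = {v_1, …, v_Q}` of a `Q`-point. -/
def AQspt {α : Type*} {Q : ℕ} (T : AQ α Q) : Set α := Set.range T.out

/-- The center of mass `η(T) := Q⁻¹ ∑_l v_l` of a `Q`-point. -/
def AQeta {α : Type*} [AddCommGroup α] [Module ℝ α] {Q : ℕ} (T : AQ α Q) : α :=
  (Q : ℝ)⁻¹ • ∑ l, T.out l

/-- `S ⊆ ℝ^d` is an `m`-dimensional submanifold of class `C¹`: near each of its points it is
the image of a `C¹` immersion defined on an open subset of `ℝ^m` which is a homeomorphism
onto its (relatively open) image. -/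
def IsC1Submanifold (m : ℕ) {d : ℕ} (S : Set (Euc d)) : Prop :=
  ∀ p ∈ S, ∃ (Ω : Set (Euc m)) (ψ : Euc m → Euc d) (V : Set (Euc d)) (g : Euc d → Euc m),
    IsOpen Ω ∧ IsOpen V ∧ p ∈ V ∧
    ContDiffOn ℝ 1 ψ Ω ∧
    (∀ x ∈ Ω, Function.Injective (fderiv ℝ ψ x)) ∧
    ψ '' Ω = S ∩ V ∧
    ContinuousOn g (S ∩ V) ∧ (∀ x ∈ Ω, g (ψ x) = x)

/-- The topology on `𝒜_Q(α)` induced by the metric `𝒢` (generated by the `𝒢`-balls). -/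
def AQTop (α : Type*) [NormedAddCommGroup α] (Q : ℕ) : TopologicalSpace (AQ α Q) :=
  TopologicalSpace.generateFrom {s | ∃ (T : AQ α Q) (r : ℝ), s = {T' | Gdist T T' < r}}

/-- The Borel σ-algebra of the metric space `(𝒜_Q(α), 𝒢)`. -/
def AQBorel (α : Type*) [NormedAddCommGroup α] (Q : ℕ) : MeasurableSpace (AQ α Q) :=
  @borel (AQ α Q) (AQTop α Q)

/-! ### Auxiliary material for the proof -/

namespace MeasSel

/-- The lexicographic linear order on `Fin n → ℝ` (made explicit because instance search
gets stuck on it). -/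
noncomputable def myLexOrd (n : ℕ) : LinearOrder (Lex (Fin n → ℝ)) :=
  @Pi.Lex.linearOrder (Fin n) (fun _ => ℝ) _
    (Finite.to_wellFoundedLT) (fun _ => inferInstance)

/-- A lexicographic linear order on `Euc n`. -/
noncomputable def eucOrd (n : ℕ) : LinearOrder (Euc n) :=
  @LinearOrder.lift' (Euc n) (Lex (Fin n → ℝ)) (myLexOrd n) (fun x => toLex (fun i => x i))
    (fun _ _ h => WithLp.ofLp_injective _ (funext fun i => congrFun (congrArg ofLex h) i))

lemma eucOrd_lt_iff {n : ℕ} (x y : Euc n) :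
    (eucOrd n).lt x y ↔ ∃ i, (∀ j, j < i → x j = y j) ∧ x i < y i := Iff.rfl

lemma eucOrd_le_iff {n : ℕ} (x y : Euc n) :
    (eucOrd n).le x y ↔ x = y ∨ (eucOrd n).lt x y := by
  letI := eucOrd n
  exact ⟨fun h => ((eq_or_lt_of_le h).imp id id), fun h => h.elim le_of_eq le_of_lt⟩

/-- The set of (weakly) lexicographically sorted `Q`-tuples. -/
def sortedSet (n Q : ℕ) : Set (Fin Q → Euc n) :=
  {f | ∀ l l' : Fin Q, l ≤ l' → (eucOrd n).le (f l) (f l')}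

/-- The canonical (sorted) representative of a `Q`-point. -/
noncomputable def sel {n Q : ℕ} (T : AQ (Euc n) Q) : Fin Q → Euc n :=
  letI := eucOrd n
  T.out ∘ Tuple.sort T.out

lemma sel_mk {n Q : ℕ} (T : AQ (Euc n) Q) :
    Quotient.mk (QPerm (Euc n) Q) (sel T) = T := by
  letI := eucOrd n
  have h : (Quotient.mk (QPerm (Euc n) Q) (sel T)) = Quotient.mk (QPerm (Euc n) Q) T.out :=
    Quotient.sound ⟨Tuple.sort T.out, rfl⟩
  rw [h, Quotient.out_eq]

lemma sel_sorted {n Q : ℕ} (T : AQ (Euc n) Q) : sel T ∈ sortedSet n Q := by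
  letI := eucOrd n
  exact fun l l' h => Tuple.monotone_sort T.out h

lemma sel_unique {n Q : ℕ} {f : Fin Q → Euc n} (hf : f ∈ sortedSet n Q)
    {T : AQ (Euc n) Q} (hT : Quotient.mk (QPerm (Euc n) Q) f = T) : f = sel T := by
  letI := eucOrd n
  have h1 : Quotient.mk (QPerm (Euc n) Q) f = Quotient.mk (QPerm (Euc n) Q) T.out := by
    rw [hT, Quotient.out_eq]
  obtain ⟨σ, rfl⟩ := Quotient.exact h1
  exact Tuple.comp_sort_eq_comp_iff_monotone.mpr (fun l l' h => hf l l' h)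

/-! ### Fσ sets -/

variable {X : Type*} [TopologicalSpace X]

/-- A countable union of closed sets. -/
def IsFsigma (s : Set X) : Prop :=
  ∃ F : ℕ → Set X, (∀ k, IsClosed (F k)) ∧ s = ⋃ k, F k

lemma isFsigma_of_isClosed {s : Set X} (h : IsClosed s) : IsFsigma s :=
  ⟨fun _ => s, fun _ => h, (Set.iUnion_const s).symm⟩

lemma isFsigma_iUnion_closed {ι : Type*} [Countable ι] (F : ι → Set X)
    (h : ∀ i, IsClosed (F i)) : IsFsigma (⋃ i, F i) := by
  rcases isEmpty_or_nonempty ι with h' | h'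
  · rw [Set.iUnion_of_empty]
    exact isFsigma_of_isClosed isClosed_empty
  · obtain ⟨g, hg⟩ := exists_surjective_nat ι
    exact ⟨fun k => F (g k), fun k => h _, (hg.iUnion_comp F).symm⟩

lemma isFsigma_iUnion {ι : Type*} [Countable ι] (A : ι → Set X)
    (h : ∀ i, IsFsigma (A i)) : IsFsigma (⋃ i, A i) := by
  choose F hF hA using h
  have key : ⋃ i, A i = ⋃ p : ι × ℕ, F p.1 p.2 := by
    ext x
    simp only [Set.mem_iUnion, hA]
    exact ⟨fun ⟨i, k, h⟩ => ⟨(i, k), h⟩, fun ⟨p, h⟩ => ⟨p.1, p.2, h⟩⟩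
  rw [key]
  exact isFsigma_iUnion_closed (fun p : ι × ℕ => F p.1 p.2) (fun p => hF p.1 p.2)

lemma IsFsigma.union {s t : Set X} (hs : IsFsigma s) (ht : IsFsigma t) :
    IsFsigma (s ∪ t) := by
  obtain ⟨F, hF, rfl⟩ := hs
  obtain ⟨G, hG, rfl⟩ := ht
  exact ⟨fun k => F k ∪ G k, fun k => (hF k).union (hG k),
    (Set.iUnion_union_distrib F G).symm⟩

lemma isFsigma_inter_closed {C s : Set X} (hC : IsClosed C) (hs : IsFsigma s) :
    IsFsigma (C ∩ s) := by
  obtain ⟨F, hF, rfl⟩ := hs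
  rw [Set.inter_iUnion]
  exact isFsigma_iUnion_closed _ (fun k => hC.inter (hF k))

lemma isFsigma_iInter {ι : Type*} [Finite ι] (A : ι → Set X)
    (h : ∀ i, IsFsigma (A i)) : IsFsigma (⋂ i, A i) := by
  choose F hF hA using h
  have key : ⋂ i, A i = ⋃ g : ι → ℕ, ⋂ i, F i (g i) := by
    ext x
    simp only [Set.mem_iInter, Set.mem_iUnion, hA]
    exact ⟨fun hx => Classical.skolem.mp hx, fun ⟨g, hg⟩ i => ⟨g i, hg i⟩⟩
  rw [key]
  exact isFsigma_iUnion_closed _ (fun g => isClosed_iInter fun i => hF i (g i))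

/-! ### The sorted set is Fσ -/

lemma continuous_coord {n Q : ℕ} (l : Fin Q) (i : Fin n) :
    Continuous (fun f : Fin Q → Euc n => f l i) :=
  (EuclideanSpace.proj (𝕜 := ℝ) i).continuous.comp (continuous_apply l)

lemma isFsigma_ltSet {n Q : ℕ} (l l' : Fin Q) :
    IsFsigma {f : Fin Q → Euc n | (eucOrd n).lt (f l) (f l')} := by
  classical
  have key : {f : Fin Q → Euc n | (eucOrd n).lt (f l) (f l')} =
      ⋃ i : Fin n, ⋃ q : ℚ × ℚ,
        (if (q.1 < q.2) then
          ({f : Fin Q → Euc n | ∀ j, j < i → f l j = f l' j} ∩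
            {f | f l i ≤ (q.1 : ℝ)} ∩ {f | (q.2 : ℝ) ≤ f l' i})
        else (∅ : Set (Fin Q → Euc n))) := by
    ext f
    simp only [Set.mem_setOf_eq, Set.mem_iUnion]
    constructor
    · intro hf
      rw [eucOrd_lt_iff] at hf
      obtain ⟨i, hpre, hlt⟩ := hf
      obtain ⟨q1, hq1a, hq1b⟩ := exists_rat_btwn hlt
      obtain ⟨q2, hq2a, hq2b⟩ := exists_rat_btwn hq1b
      refine ⟨i, (q1, q2), ?_⟩
      rw [if_pos (by exact_mod_cast hq2a)]
      exact ⟨⟨hpre, le_of_lt hq1a⟩, le_of_lt hq2b⟩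
    · rintro ⟨i, q, hq⟩
      by_cases hqq : q.1 < q.2
      · rw [if_pos hqq] at hq
        obtain ⟨⟨hpre, h1⟩, h2⟩ := hq
        rw [eucOrd_lt_iff]
        exact ⟨i, hpre, lt_of_le_of_lt h1 (lt_of_lt_of_le (Rat.cast_lt.mpr hqq) h2)⟩
      · rw [if_neg hqq] at hq
        exact absurd hq (Set.notMem_empty f)
  rw [key]
  refine isFsigma_iUnion _ fun i => isFsigma_iUnion _ fun q => ?_
  by_cases hqq : q.1 < q.2
  · rw [if_pos hqq]
    refine isFsigma_of_isClosed ?_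
    refine IsClosed.inter (IsClosed.inter ?_ ?_) ?_
    · have : {f : Fin Q → Euc n | ∀ j, j < i → f l j = f l' j} =
          ⋂ j : Fin n, (if j < i then {f : Fin Q → Euc n | f l j = f l' j} else Set.univ) := by
        ext f
        simp only [Set.mem_setOf_eq, Set.mem_iInter]
        constructor
        · intro hf j
          by_cases hj : j < i
          · rw [if_pos hj]; exact hf j hj
          · rw [if_neg hj]; trivial
        · intro hf j hj
          have := hf j
          rwa [if_pos hj] at this
      rw [this]
      refine isClosed_iInter fun j => ?_
      by_cases hj : j < i
      · rw [if_pos hj]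
        exact isClosed_eq (continuous_coord l j) (continuous_coord l' j)
      · rw [if_neg hj]; exact isClosed_univ
    · exact isClosed_le (continuous_coord l i) continuous_const
    · exact isClosed_le continuous_const (continuous_coord l' i)
  · rw [if_neg hqq]
    exact isFsigma_of_isClosed isClosed_empty

lemma isFsigma_sortedSet (n Q : ℕ) : IsFsigma (sortedSet n Q) := by
  classical
  have key : sortedSet n Q = ⋂ p : Fin Q × Fin Q,
      (if p.1 ≤ p.2 then
        ({f : Fin Q → Euc n | f p.1 = f p.2} ∪ {f | (eucOrd n).lt (f p.1) (f p.2)})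
      else Set.univ) := by
    ext f
    simp only [sortedSet, Set.mem_setOf_eq, Set.mem_iInter]
    constructor
    · intro hf p
      by_cases hp : p.1 ≤ p.2
      · rw [if_pos hp]
        have := hf p.1 p.2 hp
        rw [eucOrd_le_iff] at this
        exact this.imp id id
      · rw [if_neg hp]; trivial
    · intro hf l l' h
      have := hf (l, l')
      rw [if_pos h] at this
      rw [eucOrd_le_iff]
      exact this.imp id id
  rw [key]
  refine isFsigma_iInter _ fun p => ?_
  by_cases hp : p.1 ≤ p.2
  · rw [if_pos hp]
    refine IsFsigma.union (isFsigma_of_isClosed ?_) (isFsigma_ltSet p.1 p.2)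
    exact isClosed_eq (continuous_apply (A := fun _ : Fin Q => Euc n) p.1)
      (continuous_apply (A := fun _ : Fin Q => Euc n) p.2)
  · rw [if_neg hp]
    exact isFsigma_of_isClosed isClosed_univ

/-! ### `Gdist` facts -/

lemma gdist_le {n Q : ℕ} (T T' : AQ (Euc n) Q) (σ : Equiv.Perm (Fin Q)) :
    Gdist T T' ≤ Real.sqrt (∑ l, ‖T.out l - T'.out (σ l)‖ ^ 2) :=
  ciInf_le (Set.Finite.bddBelow (Set.finite_range _)) σ

lemma gdist_self {n Q : ℕ} (T : AQ (Euc n) Q) : Gdist T T = 0 := by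
  refine le_antisymm ?_ (le_ciInf fun σ => Real.sqrt_nonneg _)
  have := gdist_le T T (Equiv.refl (Fin Q))
  simpa using this

/-- The image under the quotient map of a closed set of tuples is closed for `AQTop`. -/
lemma isClosed_image_mk {n Q : ℕ} (D : Set (Fin Q → Euc n)) (hD : IsClosed D) :
    @IsClosed _ (AQTop (Euc n) Q) (Quotient.mk (QPerm (Euc n) Q) '' D) := by
  rcases D.eq_empty_or_nonempty with rfl | hDne
  · rw [Set.image_empty]
    exact @isClosed_empty _ (AQTop (Euc n) Q)
  set π : (Fin Q → Euc n) → AQ (Euc n) Q := Quotient.mk (QPerm (Euc n) Q) with hπ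
  set sat : Set (Fin Q → Euc n) := ⋃ σ : Equiv.Perm (Fin Q), (fun f => f ∘ σ) ⁻¹' D with hsat
  have hsatcl : IsClosed sat :=
    isClosed_iUnion_of_finite fun σ =>
      hD.preimage (continuous_pi fun l => continuous_apply (σ l))
  have hsatne : sat.Nonempty := by
    obtain ⟨f₀, hf₀⟩ := hDne
    exact ⟨f₀, Set.mem_iUnion.mpr ⟨Equiv.refl _, by simpa using hf₀⟩⟩
  have hmem : ∀ T : AQ (Euc n) Q, T ∈ π '' D ↔ T.out ∈ sat := by
    intro T
    constructor
    · rintro ⟨f, hf, rfl⟩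
      have h1 : Quotient.mk (QPerm (Euc n) Q) ((π f).out) = Quotient.mk (QPerm (Euc n) Q) f := by
        rw [Quotient.out_eq]
      obtain ⟨σ, hσ⟩ := Quotient.exact h1
      refine Set.mem_iUnion.mpr ⟨σ.symm, ?_⟩
      have : (π f).out ∘ σ.symm = f := by
        funext l
        rw [hσ]
        simp
      simpa [this] using hf
    · intro hT
      obtain ⟨σ, hσ⟩ := Set.mem_iUnion.mp hT
      refine ⟨T.out ∘ σ, hσ, ?_⟩
      have : π (T.out ∘ σ) = π T.out := Quotient.sound ⟨σ, rfl⟩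
      rw [this, hπ, Quotient.out_eq]
  have hopen : @IsOpen _ (AQTop (Euc n) Q) ((π '' D)ᶜ) := by
    have hcover : (π '' D)ᶜ =
        ⋃ T ∈ (π '' D)ᶜ, {T' | Gdist T T' < Metric.infDist T.out sat} := by
      ext T₀
      simp only [Set.mem_iUnion, Set.mem_setOf_eq]
      constructor
      · intro h
        refine ⟨T₀, h, ?_⟩
        rw [gdist_self]
        refine (hsatcl.notMem_iff_infDist_pos hsatne).mp ?_
        intro hc
        exact h ((hmem T₀).mpr hc)
      · rintro ⟨T, hT, hlt⟩
        intro hc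
        have h1 : T₀.out ∈ sat := (hmem T₀).mp hc
        have h2 : ∀ σ : Equiv.Perm (Fin Q),
            Metric.infDist T.out sat ≤ Real.sqrt (∑ l, ‖T.out l - T₀.out (σ l)‖ ^ 2) := by
          intro σ
          have hmemσ : T₀.out ∘ σ ∈ sat := by
            obtain ⟨τ, hτ⟩ := Set.mem_iUnion.mp h1
            refine Set.mem_iUnion.mpr ⟨τ.trans σ.symm,
              show (T₀.out ∘ ⇑σ) ∘ ⇑(τ.trans σ.symm) ∈ D from ?_⟩
            have heq : (T₀.out ∘ ⇑σ) ∘ ⇑(τ.trans σ.symm) = T₀.out ∘ ⇑τ := by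
              funext l
              simp
            rw [heq]
            exact hτ
          have hd : dist T.out (T₀.out ∘ σ) ≤ Real.sqrt (∑ l, ‖T.out l - T₀.out (σ l)‖ ^ 2) := by
            rw [dist_pi_le_iff (Real.sqrt_nonneg _)]
            intro l
            calc dist (T.out l) ((T₀.out ∘ σ) l) = ‖T.out l - T₀.out (σ l)‖ := dist_eq_norm _ _
              _ = Real.sqrt (‖T.out l - T₀.out (σ l)‖ ^ 2) :=
                  (Real.sqrt_sq (norm_nonneg _)).symm
              _ ≤ Real.sqrt (∑ l, ‖T.out l - T₀.out (σ l)‖ ^ 2) :=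
                  Real.sqrt_le_sqrt (Finset.single_le_sum
                    (fun j _ => sq_nonneg (‖T.out j - T₀.out (σ j)‖)) (Finset.mem_univ l))
          exact le_trans (Metric.infDist_le_dist_of_mem hmemσ) hd
        have : Metric.infDist T.out sat ≤ Gdist T T₀ := le_ciInf h2
        exact absurd hlt (not_lt.mpr this)
    rw [hcover]
    letI : TopologicalSpace (AQ (Euc n) Q) := AQTop (Euc n) Q
    refine isOpen_biUnion fun T _ => ?_
    exact TopologicalSpace.GenerateOpen.basic _ ⟨T, _, rfl⟩
  exact @IsClosed.mk _ (AQTop (Euc n) Q) _ hopen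

/-- A set closed for `AQTop` is measurable for `AQBorel`. -/
lemma measurableSet_of_aqclosed {n Q : ℕ} {s : Set (AQ (Euc n) Q)}
    (hs : @IsClosed _ (AQTop (Euc n) Q) s) :
    MeasurableSet[AQBorel (Euc n) Q] s := by
  have h1 : MeasurableSet[AQBorel (Euc n) Q] sᶜ :=
    MeasurableSpace.measurableSet_generateFrom hs.isOpen_compl
  simpa using h1.compl

/-- The selection map is measurable from `AQBorel` to the Borel σ-algebra of the tuples. -/
lemma measurable_sel (n Q : ℕ) :
    @Measurable (AQ (Euc n) Q) (Fin Q → Euc n) (AQBorel (Euc n) Q) _ sel := by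
  suffices h : ∀ C : Set (Fin Q → Euc n), IsClosed C →
      MeasurableSet[AQBorel (Euc n) Q] (sel ⁻¹' C) by
    have h2 : @Measurable _ _ (AQBorel (Euc n) Q)
        (MeasurableSpace.generateFrom {t : Set (Fin Q → Euc n) | IsClosed t}) sel :=
      @measurable_generateFrom _ _ (AQBorel (Euc n) Q)
        {t : Set (Fin Q → Euc n) | IsClosed t} sel (fun C hC => h C hC)
    intro s hs
    refine h2 ?_
    rw [← borel_eq_generateFrom_isClosed, ← BorelSpace.measurable_eq (α := Fin Q → Euc n)]
    exact hs
  intro C hC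
  have hpre : sel ⁻¹' C = Quotient.mk (QPerm (Euc n) Q) '' (C ∩ sortedSet n Q) := by
    ext T
    constructor
    · intro hT
      exact ⟨sel T, ⟨hT, sel_sorted T⟩, sel_mk T⟩
    · rintro ⟨f, ⟨hfC, hfs⟩, rfl⟩
      have : f = sel (Quotient.mk (QPerm (Euc n) Q) f) := sel_unique hfs rfl
      show sel (Quotient.mk (QPerm (Euc n) Q) f) ∈ C
      rw [← this]
      exact hfC
  obtain ⟨F, hFcl, hFeq⟩ := isFsigma_inter_closed hC (isFsigma_sortedSet n Q)
  rw [hpre, hFeq, Set.image_iUnion]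
  exact MeasurableSet.iUnion fun k =>
    measurableSet_of_aqclosed (isClosed_image_mk (F k) (hFcl k))

end MeasSel

/-- **Measurable selection.** Let `Σ` be an `m`-dimensional `C¹` submanifold of
`ℝ^d`, `B ⊆ Σ` an `ℋ^m`-measurable set, and `u : B → 𝒜_Q(ℝⁿ)` measurable (w.r.t. the Borel
σ-algebra of `(𝒜_Q(ℝⁿ), 𝒢)`).  Then there are measurable `u_1, …, u_Q : B → ℝⁿ` with
`u(p) = ∑_l ⟦u_l(p)⟧` for `ℋ^m`-a.e. `p ∈ B`. -/
theorem measurable_selection (m d n Q : ℕ) (hQ : 0 < Q)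
    (S : Set (Euc d)) (hS : IsC1Submanifold m S)
    (B : Set (Euc d)) (hBS : B ⊆ S) (hB : MeasurableSet B)
    (u : Euc d → AQ (Euc n) Q)
    (hu : @Measurable ↥B (AQ (Euc n) Q) Subtype.instMeasurableSpace (AQBorel (Euc n) Q)
      (fun p => u p.1)) :
    ∃ ul : Fin Q → Euc d → Euc n,
      (∀ l : Fin Q, Measurable (fun p : ↥B => ul l p.1)) ∧
      ∀ᵐ p ∂((μH[(m : ℝ)] : Measure (Euc d)).restrict B),
        u p = AQmk (fun l => ul l p) := by
  refine ⟨fun l p => MeasSel.sel (u p) l, ?_, ?_⟩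
  · intro l
    have hcomp : Measurable (fun p : ↥B => MeasSel.sel (u p.1)) :=
      (MeasSel.measurable_sel n Q).comp hu
    exact (measurable_pi_apply l).comp hcomp
  · refine Filter.Eventually.of_forall fun p => ?_
    exact (MeasSel.sel_mk (u p)).symm
end
end

section
/- Let Ω ⊂ ℝᵐ be open and convex, let τ > 0, and let M be a Q-multisection of the trivial bundle Ω × ℝⁿ which is coherent and satisfies the τ-cone condition. Then the associated Q-valued function u_M : Ω → 𝒜_Q(ℝⁿ) is Lipschitz continuous with Lip(u_M) ≤ √Q · τ. -/
open scoped BigOperators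
open Metric MeasureTheory Asymptotics
open scoped Classical

noncomputable section

/-- A `Q`-multisection of the trivial bundle `ℝ^d × ℝⁿ → ℝ^d` over a subset `S ⊆ ℝ^d`:
on each fiber over `S` the multiplicities add up to `Q`. -/
def IsMultisectionOn {d n : ℕ} (M : Euc d → Euc n → ℕ) (S : Set (Euc d)) (Q : ℕ) : Prop :=
  ∀ x ∈ S, {v : Euc n | 0 < M x v}.Finite ∧ (∑ᶠ v ∈ {v : Euc n | 0 < M x v}, M x v) = Q

/-- Coherence of a multisection of the trivial bundle over `S`: for every `x ∈ S` and every
disjoint family of open sets, each containing exactly one point of `M_x`, there is a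
neighborhood `U` of `x` on which the multiplicity inside each member of the family is
conserved. -/
def CoherentOn {d n : ℕ} (M : Euc d → Euc n → ℕ) (S : Set (Euc d)) : Prop :=
  ∀ p ∈ S, ∀ 𝒱 : Finset (Set (Euc n)),
    (∀ V ∈ 𝒱, IsOpen V) →
    ((𝒱 : Set (Set (Euc n))).Pairwise Disjoint) →
    (∀ V ∈ 𝒱, ∃! v : Euc n, 0 < M p v ∧ v ∈ V) →
    ∃ U : Set (Euc d), IsOpen U ∧ p ∈ U ∧
      ∀ q ∈ S ∩ U, ∀ V ∈ 𝒱, ∀ v : Euc n, 0 < M p v → v ∈ V →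
        (∑ᶠ w ∈ (V ∩ {w : Euc n | 0 < M q w}), M q w) = M p v

/-- The `τ`-cone condition for a multisection of the trivial bundle over `S`: around every
point `(x,v)` with `M(x,v) > 0`, the set `{M > 0}` is contained in the `τ`-cone centered at
`(x,v)`. -/
def ConeCondOn {d n : ℕ} (M : Euc d → Euc n → ℕ) (S : Set (Euc d)) (τ : ℝ) : Prop :=
  ∀ x ∈ S, ∀ v : Euc n, 0 < M x v →
    ∃ U : Set (Euc d), IsOpen U ∧ x ∈ U ∧ ∃ V : Set (Euc n), IsOpen V ∧ v ∈ V ∧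
      ∀ y ∈ S ∩ U, ∀ w ∈ V, 0 < M y w → ‖w - v‖ ≤ τ * ‖y - x‖

lemma aux_perm {α : Type*} {Q : ℕ} (f g : Fin Q → α)
    (h : ∀ v, Fintype.card {l // f l = v} = Fintype.card {l // g l = v}) :
    ∃ σ : Equiv.Perm (Fin Q), ∀ l, g (σ l) = f l := by
  have h' : ∀ v : α, Nonempty ({l // f l = v} ≃ {l // g l = v}) :=
    fun v => ⟨Fintype.equivOfCardEq (h v)⟩
  let E : (Σ v, {l // f l = v}) ≃ (Σ v, {l // g l = v}) :=
    Equiv.sigmaCongrRight fun v => (h' v).some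
  let e1 : (Σ v, {l // f l = v}) ≃ Fin Q := Equiv.sigmaFiberEquiv f
  let e2 : (Σ v, {l // g l = v}) ≃ Fin Q := Equiv.sigmaFiberEquiv g
  refine ⟨e1.symm.trans (E.trans e2), fun l => ?_⟩
  have h2 : ∀ s : (Σ v, {l // g l = v}), g (e2 s) = s.1 := fun s => s.2.2
  have h3 : (E (e1.symm l)).1 = (e1.symm l).1 := rfl
  have h1 : (e1.symm l).1 = f l := rfl
  simp only [Equiv.trans_apply]
  rw [h2, h3, h1]

lemma card_theta {α : Type*} {Q : ℕ} (T : AQ α Q) (v : α) :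
    Fintype.card {l // T.out l = v} = Theta T v := by
  rw [Theta, Fintype.card_subtype]
  rw [Set.ncard_eq_toFinset_card']
  congr 1
  ext l
  simp

lemma local_match {m n Q : ℕ} {Ω : Set (Euc m)} (hΩo : IsOpen Ω) {τ : ℝ} (hτ : 0 < τ)
    {M : Euc m → Euc n → ℕ} (hM : IsMultisectionOn M Ω Q)
    (hcoh : CoherentOn M Ω) (hcone : ConeCondOn M Ω τ)
    {u : Euc m → AQ (Euc n) Q} (hu : ∀ x ∈ Ω, ∀ v, Theta (u x) v = M x v)
    {p : Euc m} (hp : p ∈ Ω) :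
    ∃ ε > 0, ∀ q ∈ Ω, dist q p < ε → ∃ σ : Equiv.Perm (Fin Q),
      ∀ l, ‖(u q).out l - (u p).out (σ l)‖ ≤ τ * ‖q - p‖ := by
  classical
  obtain ⟨hFfin, hFsum⟩ := hM p hp
  set F : Set (Euc n) := {v | 0 < M p v} with hFdef
  set FF : Finset (Euc n) := hFfin.toFinset with hFFdef
  have hFFmem : ∀ v, v ∈ FF ↔ 0 < M p v := by intro v; simp [hFFdef, hFdef]
  -- cone condition data
  have hcone' : ∀ v : Euc n, 0 < M p v → ∃ U : Set (Euc m), IsOpen U ∧ p ∈ U ∧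
      ∃ V : Set (Euc n), IsOpen V ∧ v ∈ V ∧
      ∀ y ∈ Ω ∩ U, ∀ w ∈ V, 0 < M y w → ‖w - v‖ ≤ τ * ‖y - p‖ :=
    fun v hv => hcone p hp v hv
  choose! U hUo hpU V hVo hvV hVc using hcone'
  -- separation δ
  set P : Finset (Euc n × Euc n) := (FF ×ˢ FF).filter (fun z => z.1 ≠ z.2) with hPdef
  set δ : ℝ := if h : P.Nonempty then P.inf' h (fun z => dist z.1 z.2) else 1 with hδdef
  have hδpos : 0 < δ := by
    rw [hδdef]
    split_ifs with h
    · refine (Finset.lt_inf'_iff h).2 ?_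
      rintro ⟨v, v'⟩ hz
      simp only [hPdef, Finset.mem_filter] at hz
      exact dist_pos.2 hz.2
    · norm_num
  have hδle : ∀ v ∈ FF, ∀ v' ∈ FF, v ≠ v' → δ ≤ dist v v' := by
    intro v hv v' hv' hne
    have hz : (v, v') ∈ P := by
      simp only [hPdef, Finset.mem_filter, Finset.mem_product]
      exact ⟨⟨hv, hv'⟩, hne⟩
    rw [hδdef, dif_pos ⟨_, hz⟩]
    exact Finset.inf'_le _ hz
  -- shrunk neighborhoods
  set V' : Euc n → Set (Euc n) := fun v => V v ∩ ball v (δ/3) with hV'def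
  have hV'o : ∀ v, 0 < M p v → IsOpen (V' v) := fun v hv => (hVo v hv).inter isOpen_ball
  have hvV' : ∀ v, 0 < M p v → v ∈ V' v := fun v hv =>
    ⟨hvV v hv, mem_ball_self (by linarith)⟩
  have hV'disj : ∀ v ∈ FF, ∀ v' ∈ FF, v ≠ v' → Disjoint (V' v) (V' v') := by
    intro v hv v' hv' hne
    rw [Set.disjoint_left]
    rintro w ⟨_, hw1⟩ ⟨_, hw2⟩
    have h1 := hδle v hv v' hv' hne
    have h2 : dist v v' ≤ dist w v + dist w v' := dist_triangle_left _ _ _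
    rw [mem_ball] at hw1 hw2
    linarith
  set 𝒱 : Finset (Set (Euc n)) := FF.image V' with h𝒱def
  have h𝒱elt : ∀ W ∈ 𝒱, ∃ v ∈ FF, V' v = W := by
    intro W hW
    simpa [h𝒱def, eq_comm] using hW
  have h𝒱uniq : ∀ v₀, 0 < M p v₀ → ∀ v, (0 < M p v ∧ v ∈ V' v₀) → v = v₀ := by
    intro v₀ hv₀ v ⟨hv, hvmem⟩
    by_contra hne
    have := hδle v ((hFFmem v).2 hv) v₀ ((hFFmem v₀).2 hv₀) hne
    have h2 : dist v v₀ < δ/3 := mem_ball.1 hvmem.2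
    linarith
  obtain ⟨U₀, hU₀o, hpU₀, hU₀⟩ := hcoh p hp 𝒱
    (by intro W hW; obtain ⟨v, hv, rfl⟩ := h𝒱elt W hW; exact hV'o v ((hFFmem v).1 hv))
    (by
      intro W₁ hW₁ W₂ hW₂ hne
      obtain ⟨v₁, hv₁, rfl⟩ := h𝒱elt W₁ hW₁
      obtain ⟨v₂, hv₂, rfl⟩ := h𝒱elt W₂ hW₂
      have hvne : v₁ ≠ v₂ := by rintro rfl; exact hne rfl
      exact hV'disj v₁ hv₁ v₂ hv₂ hvne)
    (by
      intro W hW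
      obtain ⟨v, hv, rfl⟩ := h𝒱elt W hW
      have hv' := (hFFmem v).1 hv
      exact ⟨v, ⟨hv', hvV' v hv'⟩, fun v'' h'' => h𝒱uniq v hv' v'' h''⟩)
  -- the neighborhood
  set W : Set (Euc m) := Ω ∩ U₀ ∩ ⋂ v ∈ FF, U v with hWdef
  have hWo : IsOpen W := (hΩo.inter hU₀o).inter
    (isOpen_biInter_finset (fun v hv => hUo v ((hFFmem v).1 hv)))
  have hpW : p ∈ W :=
    ⟨⟨hp, hpU₀⟩, Set.mem_iInter₂.2 (fun v hv => hpU v ((hFFmem v).1 hv))⟩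
  obtain ⟨ε, hεpos, hεball⟩ := Metric.isOpen_iff.1 hWo p hpW
  refine ⟨ε, hεpos, ?_⟩
  intro q hqΩ hqd
  obtain ⟨⟨_, hqU₀⟩, hqU⟩ := hεball (mem_ball.2 hqd)
  obtain ⟨hSqfin, hSqsum⟩ := hM q hqΩ
  set SqF : Finset (Euc n) := hSqfin.toFinset with hSqFdef
  have hSqFmem : ∀ w, w ∈ SqF ↔ 0 < M q w := by intro w; simp [hSqFdef]
  have hcoeSq : ((SqF : Set (Euc n))) = {w | 0 < M q w} := hSqfin.coe_toFinset
  have hSqsum' : ∑ w ∈ SqF, M q w = Q := by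
    rw [← hSqsum, ← hcoeSq, finsum_mem_coe_finset]
  have hcoeF : ((FF : Set (Euc n))) = F := hFfin.coe_toFinset
  have hFsum' : ∑ v ∈ FF, M p v = Q := by
    rw [← hFsum, ← hcoeF, finsum_mem_coe_finset]
  have hmass : ∀ v ∈ FF, ∑ w ∈ SqF.filter (· ∈ V' v), M q w = M p v := by
    intro v hv
    have hvpos := (hFFmem v).1 hv
    have h := hU₀ q ⟨hqΩ, hqU₀⟩ (V' v) (Finset.mem_image_of_mem V' hv) v hvpos
      (hvV' v hvpos)
    have hseteq : ((SqF.filter (· ∈ V' v)) : Set (Euc n)) = V' v ∩ {w | 0 < M q w} := by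
      ext w
      simp only [Finset.coe_filter, Set.mem_setOf_eq, Set.mem_inter_iff, hSqFmem]
      tauto
    rw [← finsum_mem_coe_finset, hseteq]
    exact h
  have hdisjT : ∀ v ∈ FF, ∀ v' ∈ FF, v ≠ v' →
      Disjoint (SqF.filter (· ∈ V' v)) (SqF.filter (· ∈ V' v')) := by
    intro v hv v' hv' hne
    rw [Finset.disjoint_left]
    intro w hw hw'
    exact Set.disjoint_left.1 (hV'disj v hv v' hv' hne)
      (Finset.mem_filter.1 hw).2 (Finset.mem_filter.1 hw').2
  set B : Finset (Euc n) := FF.biUnion (fun v => SqF.filter (· ∈ V' v)) with hBdef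
  have hBsub : B ⊆ SqF := by
    intro w hw
    obtain ⟨v, hv, hw'⟩ := Finset.mem_biUnion.1 hw
    exact (Finset.mem_filter.1 hw').1
  have hBsum : ∑ w ∈ B, M q w = Q := by
    rw [hBdef, Finset.sum_biUnion ?_]
    · rw [← hFsum']
      exact Finset.sum_congr rfl hmass
    · intro v hv v' hv' hne
      exact hdisjT v hv v' hv' hne
  have hcover : ∀ w, 0 < M q w → ∃ v, v ∈ FF ∧ w ∈ V' v := by
    intro w hw
    by_contra hcon
    push_neg at hcon
    have hwS : w ∈ SqF := (hSqFmem w).2 hw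
    have hwB : w ∉ B := by
      intro hwB
      obtain ⟨v, hv, hw'⟩ := Finset.mem_biUnion.1 hwB
      exact hcon v hv (Finset.mem_filter.1 hw').2
    have hsd : ∑ x ∈ SqF \ B, M q x + ∑ x ∈ B, M q x = ∑ x ∈ SqF, M q x :=
      Finset.sum_sdiff hBsub
    rw [hBsum, hSqsum'] at hsd
    have hzero : ∑ x ∈ SqF \ B, M q x = 0 := by omega
    have hwsd : w ∈ SqF \ B := Finset.mem_sdiff.2 ⟨hwS, hwB⟩
    have hle : M q w ≤ ∑ x ∈ SqF \ B, M q x :=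
      Finset.single_le_sum (fun i _ => Nat.zero_le _) hwsd
    omega
  choose! ψ hψFF hψV using hcover
  set fq : Fin Q → Euc n := (u q).out with hfqdef
  set fp : Fin Q → Euc n := (u p).out with hfpdef
  have hcardq : ∀ w, Fintype.card {l // fq l = w} = M q w := fun w => by
    rw [hfqdef, ← hu q hqΩ w]; convert card_theta (u q) w
  have hcardp : ∀ v, Fintype.card {l // fp l = v} = M p v := fun v => by
    rw [hfpdef, ← hu p hp v]; convert card_theta (u p) v
  have hposq : ∀ l, 0 < M q (fq l) := by
    intro l
    rw [← hcardq]
    exact Fintype.card_pos_iff.2 ⟨⟨l, rfl⟩⟩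
  have hcount : ∀ v, Fintype.card {l // ψ (fq l) = v} =
      Fintype.card {l // fp l = v} := by
    intro v
    rw [hcardp]
    by_cases hv : 0 < M p v
    · have hvFF : v ∈ FF := (hFFmem v).2 hv
      have hiff : ∀ l, ψ (fq l) = v ↔ fq l ∈ V' v := by
        intro l
        have hψF := hψFF (fq l) (hposq l)
        have hψmem := hψV (fq l) (hposq l)
        constructor
        · rintro rfl; exact hψmem
        · intro hmem
          by_contra hne
          exact Set.disjoint_left.1 (hV'disj _ hψF v hvFF hne) hψmem hmem
      have hc1 : Fintype.card {l // ψ (fq l) = v} =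
          (Finset.univ.filter (fun l => fq l ∈ V' v)).card := by
        rw [Fintype.card_subtype]
        congr 1
        ext l
        simp [hiff l]
      rw [hc1, Finset.card_eq_sum_card_fiberwise
        (f := fq) (t := SqF.filter (· ∈ V' v))
        (fun l hl => Finset.mem_filter.2
          ⟨(hSqFmem _).2 (hposq l), (Finset.mem_filter.1 hl).2⟩)]
      rw [← hmass v hvFF]
      refine Finset.sum_congr rfl (fun w hw => ?_)
      obtain ⟨hwS, hwV⟩ := Finset.mem_filter.1 hw
      rw [← hcardq w, Fintype.card_subtype]
      congr 1
      ext l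
      simp only [Finset.mem_filter, Finset.mem_univ, true_and]
      constructor
      · rintro ⟨_, h2⟩; exact h2
      · intro h2; exact ⟨h2 ▸ hwV, h2⟩
    · have hv0 : M p v = 0 := Nat.eq_zero_of_not_pos hv
      rw [hv0, Fintype.card_eq_zero_iff]
      refine ⟨fun ⟨l, hl⟩ => ?_⟩
      have hmem := hψFF (fq l) (hposq l)
      rw [hl] at hmem
      exact hv ((hFFmem v).1 hmem)
  obtain ⟨σ, hσ⟩ := aux_perm (fun l => ψ (fq l)) fp
    (fun v => by convert hcount v using 2)
  refine ⟨σ, fun l => ?_⟩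
  rw [hσ l]
  have hψF := hψFF (fq l) (hposq l)
  have hψpos := (hFFmem _).1 hψF
  have hqUψ : q ∈ U (ψ (fq l)) := Set.mem_iInter₂.1 hqU _ hψF
  exact hVc _ hψpos q ⟨hqΩ, hqUψ⟩ (fq l) (hψV (fq l) (hposq l)).1 (hposq l)

/-- If `Ω ⊆ ℝ^m` is open and convex, `τ > 0`, and `M` is a coherent
`Q`-multisection of the trivial bundle `Ω × ℝⁿ` satisfying the `τ`-cone condition, then the
associated `Q`-valued function `u_M` is Lipschitz with `Lip(u_M) ≤ √Q · τ`. -/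
theorem coherent_cone_implies_lipschitz (m n Q : ℕ) (hQ : 0 < Q)
    (Ω : Set (Euc m)) (hΩo : IsOpen Ω) (hΩc : Convex ℝ Ω) (τ : ℝ) (hτ : 0 < τ)
    (M : Euc m → Euc n → ℕ) (hM : IsMultisectionOn M Ω Q)
    (hcoh : CoherentOn M Ω) (hcone : ConeCondOn M Ω τ)
    (u : Euc m → AQ (Euc n) Q)
    (hu : ∀ x ∈ Ω, ∀ v : Euc n, Theta (u x) v = M x v) :
    ∀ x ∈ Ω, ∀ y ∈ Ω, Gdist (u x) (u y) ≤ Real.sqrt Q * τ * dist x y := by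
  intro x hx y hy
  set c : ℝ := ‖y - x‖ with hcdef
  have hc0 : (0:ℝ) ≤ c := norm_nonneg _
  set γ : ℝ → Euc m := fun t => x + t • (y - x) with hγdef
  have hγmem : ∀ t ∈ Set.Icc (0:ℝ) 1, γ t ∈ Ω := by
    intro t ht
    have h := hΩc hx hy (by linarith [ht.2] : (0:ℝ) ≤ 1 - t) ht.1 (by ring)
    have he : γ t = (1 - t) • x + t • y := by
      simp only [hγdef]
      module
    rw [he]; exact h
  have hγ0 : γ 0 = x := by simp [hγdef]
  have hγ1 : γ 1 = y := by simp [hγdef]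
  have hγdist : ∀ s t : ℝ, dist (γ s) (γ t) = |s - t| * c := by
    intro s t
    rw [dist_eq_norm]
    have he : γ s - γ t = (s - t) • (y - x) := by
      simp only [hγdef]
      module
    rw [he, norm_smul, Real.norm_eq_abs]
  set S : Set ℝ := {t ∈ Set.Icc (0:ℝ) 1 | ∃ σ : Equiv.Perm (Fin Q),
    ∀ l, ‖(u (γ t)).out l - (u x).out (σ l)‖ ≤ τ * c * t} with hSdef
  have hS0 : (0:ℝ) ∈ S := by
    refine ⟨⟨le_refl 0, zero_le_one⟩, 1, fun l => ?_⟩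
    rw [hγ0]
    simp
  have hSbdd : BddAbove S := ⟨1, fun t ht => ht.1.2⟩
  have hSne : S.Nonempty := ⟨0, hS0⟩
  set T : ℝ := sSup S with hTdef
  have hT0 : 0 ≤ T := le_csSup hSbdd hS0
  have hT1 : T ≤ 1 := csSup_le hSne (fun t ht => ht.1.2)
  have hTΩ : γ T ∈ Ω := hγmem T ⟨hT0, hT1⟩
  obtain ⟨ε, hεpos, hεmatch⟩ := local_match hΩo hτ hM hcoh hcone hu hTΩ
  have hε' : 0 < ε / (c + 1) := by positivity
  have hTS : T ∈ S := by
    obtain ⟨t, htS, htlt⟩ := exists_lt_of_lt_csSup hSne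
      (by linarith : T - ε/(c+1) < T)
    have htT : t ≤ T := le_csSup hSbdd htS
    have hdq : dist (γ t) (γ T) < ε := by
      rw [hγdist, abs_sub_comm, abs_of_nonneg (by linarith : (0:ℝ) ≤ T - t)]
      calc (T - t) * c ≤ (ε/(c+1)) * c := by nlinarith
        _ < ε := by
          rw [div_mul_eq_mul_div, div_lt_iff₀ (by linarith)]
          nlinarith
    obtain ⟨σ₁, hσ₁⟩ := hεmatch (γ t) (hγmem t ⟨htS.1.1, htS.1.2⟩) hdq
    obtain ⟨σ₂, hσ₂⟩ := htS.2
    refine ⟨⟨hT0, hT1⟩, σ₁.symm.trans σ₂, fun l => ?_⟩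
    have h1 := hσ₁ (σ₁.symm l)
    rw [Equiv.apply_symm_apply] at h1
    have h3 : ‖γ t - γ T‖ = (T - t) * c := by
      rw [← dist_eq_norm, hγdist, abs_sub_comm,
        abs_of_nonneg (by linarith : (0:ℝ) ≤ T - t)]
    rw [h3] at h1
    have h2 := hσ₂ (σ₁.symm l)
    have htri : ‖(u (γ T)).out l - (u x).out ((σ₁.symm.trans σ₂) l)‖ ≤
        ‖(u (γ T)).out l - (u (γ t)).out (σ₁.symm l)‖ +
        ‖(u (γ t)).out (σ₁.symm l) - (u x).out (σ₂ (σ₁.symm l))‖ := by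
      rw [Equiv.trans_apply]
      exact norm_sub_le_norm_sub_add_norm_sub _ _ _
    rw [norm_sub_rev] at h1
    calc ‖(u (γ T)).out l - (u x).out ((σ₁.symm.trans σ₂) l)‖ ≤ _ := htri
      _ ≤ τ * ((T - t) * c) + τ * c * t := add_le_add h1 h2
      _ = τ * c * T := by ring
  have hTeq : T = 1 := by
    by_contra hne
    have hTlt : T < 1 := lt_of_le_of_ne hT1 hne
    have hε'' : 0 < ε/(2*(c+1)) := by positivity
    set t : ℝ := min 1 (T + ε/(2*(c+1))) with htdef
    have htT : T < t := lt_min hTlt (by linarith)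
    have ht1 : t ≤ 1 := min_le_left _ _
    have ht0 : 0 ≤ t := le_trans hT0 htT.le
    have htsub : t - T ≤ ε/(2*(c+1)) := by
      have := min_le_right 1 (T + ε/(2*(c+1)))
      simp only [← htdef] at this
      linarith
    have hdq : dist (γ t) (γ T) < ε := by
      rw [hγdist, abs_of_nonneg (by linarith : (0:ℝ) ≤ t - T)]
      calc (t - T) * c ≤ (ε/(2*(c+1))) * c := by nlinarith
        _ < ε := by
          rw [div_mul_eq_mul_div, div_lt_iff₀ (by linarith)]
          nlinarith
    obtain ⟨σ₁, hσ₁⟩ := hεmatch (γ t) (hγmem t ⟨ht0, ht1⟩) hdq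
    obtain ⟨σ₂, hσ₂⟩ := hTS.2
    have htS : t ∈ S := by
      refine ⟨⟨ht0, ht1⟩, σ₁.trans σ₂, fun l => ?_⟩
      have h1 := hσ₁ l
      have h3 : ‖γ t - γ T‖ = (t - T) * c := by
        rw [← dist_eq_norm, hγdist, abs_of_nonneg (by linarith : (0:ℝ) ≤ t - T)]
      rw [h3] at h1
      have h2 := hσ₂ (σ₁ l)
      have htri : ‖(u (γ t)).out l - (u x).out ((σ₁.trans σ₂) l)‖ ≤
          ‖(u (γ t)).out l - (u (γ T)).out (σ₁ l)‖ +
          ‖(u (γ T)).out (σ₁ l) - (u x).out (σ₂ (σ₁ l))‖ := by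
        rw [Equiv.trans_apply]
        exact norm_sub_le_norm_sub_add_norm_sub _ _ _
      calc ‖(u (γ t)).out l - (u x).out ((σ₁.trans σ₂) l)‖ ≤ _ := htri
        _ ≤ τ * ((t - T) * c) + τ * c * T := add_le_add h1 h2
        _ = τ * c * t := by ring
    have := le_csSup hSbdd htS
    linarith
  rw [hTeq] at hTS
  obtain ⟨_, σ, hσ⟩ := hTS
  rw [hγ1] at hσ
  have hbound : ∀ l, ‖(u x).out l - (u y).out (σ.symm l)‖ ≤ τ * c := by
    intro l
    rw [norm_sub_rev]
    have h := hσ (σ.symm l)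
    rw [Equiv.apply_symm_apply] at h
    linarith
  have hGle : Gdist (u x) (u y) ≤
      Real.sqrt (∑ l, ‖(u x).out l - (u y).out (σ.symm l)‖ ^ 2) := by
    apply ciInf_le
    refine ⟨0, ?_⟩
    rintro r ⟨σ', rfl⟩
    exact Real.sqrt_nonneg _
  have hsum : ∑ l, ‖(u x).out l - (u y).out (σ.symm l)‖ ^ 2 ≤ Q * (τ * c)^2 := by
    calc ∑ l, ‖(u x).out l - (u y).out (σ.symm l)‖ ^ 2
        ≤ ∑ _l : Fin Q, (τ * c)^2 := Finset.sum_le_sum (fun l _ => by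
          have h := hbound l
          have h0 : (0:ℝ) ≤ ‖(u x).out l - (u y).out (σ.symm l)‖ := norm_nonneg _
          nlinarith)
      _ = Q * (τ * c)^2 := by
        simp [Finset.sum_const, Finset.card_univ]
  have hsqrt : Real.sqrt (∑ l, ‖(u x).out l - (u y).out (σ.symm l)‖ ^ 2) ≤
      Real.sqrt Q * (τ * c) := by
    calc Real.sqrt (∑ l, ‖(u x).out l - (u y).out (σ.symm l)‖ ^ 2)
        ≤ Real.sqrt (Q * (τ * c)^2) := Real.sqrt_le_sqrt hsum
      _ = Real.sqrt Q * (τ * c) := by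
        rw [Real.sqrt_mul (Nat.cast_nonneg Q), Real.sqrt_sq (by positivity)]
  have hdistxy : dist x y = c := by rw [dist_eq_norm, hcdef, norm_sub_rev]
  rw [hdistxy]
  calc Gdist (u x) (u y) ≤ _ := hGle
    _ ≤ Real.sqrt Q * (τ * c) := hsqrt
    _ = Real.sqrt Q * τ * c := by ring
end
end

section
/- Reparametrization theorem, comparison estimate: There exists a constant c₀ > 0, depending only on m, n, Q, r − s and r/s, such that whenever hypothesis (H) holds and N : Σ → 𝒜_Q(ℝ^{m+n}) is the well-defined map N(p) := ∑_{v ∈ κ_p, |v| < c₀} M(p+v)⟦v⟧, then for every x ∈ B_s one has (1/(2√Q)) |N(Φ(x))| ≤ 𝒢(f(x), Q⟦φ(x)⟧) ≤ 2√Q |N(Φ(x))|, where |N(p)| := 𝒢(N(p), Q⟦0⟧). -/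
open scoped BigOperators
open Metric MeasureTheory Asymptotics
open scoped Classical

noncomputable section

/-- `ℝ^{m+n} = ℝ^m × ℝ^n` with the Euclidean (L²) norm. -/
abbrev EucP (m n : ℕ) : Type := WithLp 2 (Euc m × Euc n)

/-- The point of `ℝ^{m+n}` with horizontal part `x` and vertical part `y`. -/
def mkP {m n : ℕ} (x : Euc m) (y : Euc n) : EucP m n :=
  (WithLp.equiv 2 (Euc m × Euc n)).symm (x, y)

/-- Orthogonal projection `p_{π₀}` of `ℝ^{m+n}` onto `ℝ^m × {0} ≃ ℝ^m`. -/
def projH {m n : ℕ} (ξ : EucP m n) : Euc m := (WithLp.equiv 2 (Euc m × Euc n) ξ).1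

/-- Orthogonal projection `p_{π₀^⊥}` of `ℝ^{m+n}` onto `{0} × ℝ^n ≃ ℝ^n`. -/
def projV {m n : ℕ} (ξ : EucP m n) : Euc n := (WithLp.equiv 2 (Euc m × Euc n) ξ).2

/-- The linear map `τ ↦ (τ, A τ)`, whose range is the tangent plane of a graph. -/
def graphMap {m n : ℕ} (A : Euc m →L[ℝ] Euc n) : Euc m →ₗ[ℝ] EucP m n :=
  (WithLp.linearEquiv 2 ℝ (Euc m × Euc n)).symm.toLinearMap.comp
    ((LinearMap.id : Euc m →ₗ[ℝ] Euc m).prod (A : Euc m →ₗ[ℝ] Euc n))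

/-- The graph parametrization `Φ(x) := (x, φ(x))`. -/
def Phi {m n : ℕ} (φ : Euc m → Euc n) (x : Euc m) : EucP m n := mkP x (φ x)

/-- The tangent space `T_{Φ(x)} Gr(φ) = {(τ, Dφ(x)·τ) : τ ∈ ℝ^m}` of the graph of `φ`. -/
def tangentSpace {m n : ℕ} (φ : Euc m → Euc n) (x : Euc m) : Submodule ℝ (EucP m n) :=
  LinearMap.range (graphMap (fderiv ℝ φ x))

/-- `v ∈ κ_{Φ(x)}`: `v` is orthogonal to the tangent space of the graph of `φ` at `Φ(x)`. -/
def IsNormalAt {m n : ℕ} (φ : Euc m → Euc n) (x : Euc m) (v : EucP m n) : Prop :=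
  v ∈ (tangentSpace φ x)ᗮ

/-- The multiplicity function `M(ξ) := Θ_{f(p_{π₀}(ξ))}(p_{π₀^⊥}(ξ))` of the multisection
associated to the `Q`-valued function `f`. -/
def Mmap {m n Q : ℕ} (f : Euc m → AQ (Euc n) Q) (ξ : EucP m n) : ℕ :=
  Theta (f (projH ξ)) (projV ξ)

/-- Hypothesis (H): `φ` is `C³` on `B_s`, `f` is `L`-Lipschitz on `B_r` (w.r.t. `𝒢`), and
`‖φ‖_{C²} + Lip(f) ≤ c₀`, `‖φ‖_{C⁰} + ‖f‖_{C⁰} ≤ c₀ s`. -/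
def HypH {m n Q : ℕ} (s r c₀ L : ℝ) (φ : Euc m → Euc n) (f : Euc m → AQ (Euc n) Q) : Prop :=
  0 ≤ L ∧ ContDiffOn ℝ 3 φ (ball (0 : Euc m) s) ∧
  (∀ x ∈ ball (0 : Euc m) r, ∀ y ∈ ball (0 : Euc m) r, Gdist (f x) (f y) ≤ L * dist x y) ∧
  (∀ x ∈ ball (0 : Euc m) s,
    ‖φ x‖ + ‖fderiv ℝ φ x‖ + ‖fderiv ℝ (fderiv ℝ φ) x‖ + L ≤ c₀) ∧
  (∀ x ∈ ball (0 : Euc m) s, ∀ y ∈ ball (0 : Euc m) r,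
    ‖φ x‖ + Gdist (f y) (AQmk (fun _ => (0 : Euc n))) ≤ c₀ * s)

/-- `T = N(Φ(x))`: `T` is the `Q`-point of `ℝ^{m+n}` whose multiplicity at each `v` equals
`M(Φ(x)+v)` when `v` is a normal vector to the graph of `φ` at `Φ(x)` with `|v| < c₀`, and
vanishes otherwise.  This characterizes the reparametrizing normal vector field `N`. -/
def IsNField {m n Q : ℕ} (c₀ : ℝ) (φ : Euc m → Euc n) (f : Euc m → AQ (Euc n) Q)
    (x : Euc m) (T : AQ (EucP m n) Q) : Prop :=
  ∀ v : EucP m n, Theta T v =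
    if IsNormalAt φ x v ∧ ‖v‖ < c₀ then Mmap f (Phi φ x + v) else 0

/-- The set `M_p` (for `p = Φ(x)`) of the points `p + v`, `v ∈ κ_p`, `|v| < c₀`, of the fiber
of the tubular neighborhood over `p` carrying positive multiplicity. -/
def MsetAt {m n Q : ℕ} (c₀ : ℝ) (φ : Euc m → Euc n) (f : Euc m → AQ (Euc n) Q)
    (x : Euc m) : Set (EucP m n) :=
  {ξ | ∃ v : EucP m n, IsNormalAt φ x v ∧ ‖v‖ < c₀ ∧ ξ = Phi φ x + v ∧ 0 < Mmap f ξ}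

section AuxiliaryLemmas

lemma RCE_le_of_sq_le_sq {a b : ℝ} (ha : 0 ≤ a) (hb : 0 ≤ b) (h : a ^ 2 ≤ b ^ 2) : a ≤ b := by
  nlinarith

lemma aqmk_const_out {α : Type*} {Q : ℕ} (c : α) :
    (AQmk (fun _ : Fin Q => c)).out = fun _ => c := by
  obtain ⟨σ, h⟩ := Quotient.mk_out (s := QPerm α Q) (fun _ : Fin Q => c)
  exact h

lemma gdist_const_eq {α : Type*} [NormedAddCommGroup α] {Q : ℕ} (T : AQ α Q) (c : α) :
    Gdist T (AQmk (fun _ => c)) = Real.sqrt (∑ l, ‖T.out l - c‖ ^ 2) := by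
  unfold Gdist Gfun
  rw [aqmk_const_out]
  exact ciInf_const

lemma gdist_nonneg {α : Type*} [NormedAddCommGroup α] {Q : ℕ} (S T : AQ α Q) :
    0 ≤ Gdist S T :=
  le_ciInf fun _ => Real.sqrt_nonneg _

lemma norm_out_sub_le {α : Type*} [NormedAddCommGroup α] {Q : ℕ} (T : AQ α Q) (c : α)
    (l : Fin Q) : ‖T.out l - c‖ ≤ Gdist T (AQmk (fun _ => c)) := by
  rw [gdist_const_eq]
  have h1 : ‖T.out l - c‖ ^ 2 ≤ ∑ k, ‖T.out k - c‖ ^ 2 :=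
    Finset.single_le_sum (f := fun k => ‖T.out k - c‖ ^ 2)
      (fun k _ => sq_nonneg _) (Finset.mem_univ l)
  calc ‖T.out l - c‖ = Real.sqrt (‖T.out l - c‖ ^ 2) := by
        rw [Real.sqrt_sq (norm_nonneg _)]
    _ ≤ _ := Real.sqrt_le_sqrt h1

lemma exists_close_sheet {α : Type*} [NormedAddCommGroup α] {Q : ℕ} (hQ : 0 < Q)
    (S T : AQ α Q) (l : Fin Q) : ∃ k, ‖S.out l - T.out k‖ ≤ Gdist S T := by
  obtain ⟨k₀, -, hk₀⟩ := Finset.exists_min_image Finset.univ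
    (fun k => ‖S.out l - T.out k‖) ⟨⟨0, hQ⟩, Finset.mem_univ _⟩
  refine ⟨k₀, le_ciInf fun σ => ?_⟩
  calc ‖S.out l - T.out k₀‖ ≤ ‖S.out l - T.out (σ l)‖ := hk₀ _ (Finset.mem_univ _)
    _ = Real.sqrt (‖S.out l - T.out (σ l)‖ ^ 2) := by rw [Real.sqrt_sq (norm_nonneg _)]
    _ ≤ Real.sqrt (∑ k, ‖S.out k - T.out (σ k)‖ ^ 2) := Real.sqrt_le_sqrt
        (Finset.single_le_sum (f := fun k => ‖S.out k - T.out (σ k)‖ ^ 2)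
          (fun k _ => sq_nonneg _) (Finset.mem_univ l))

lemma theta_pos_iff {α : Type*} {Q : ℕ} (T : AQ α Q) (v : α) :
    0 < Theta T v ↔ ∃ l, T.out l = v := by
  unfold Theta
  rw [Set.ncard_pos (Set.toFinite _)]
  exact ⟨fun ⟨l, hl⟩ => ⟨l, hl⟩, fun ⟨l, hl⟩ => ⟨l, hl⟩⟩

lemma normP_sq {m n : ℕ} (v : EucP m n) : ‖v‖ ^ 2 = ‖projH v‖ ^ 2 + ‖projV v‖ ^ 2 :=
  WithLp.prod_norm_sq_eq_of_L2 v

lemma isNormalAt_iff {m n : ℕ} (φ : Euc m → Euc n) (x : Euc m) (v : EucP m n) :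
    IsNormalAt φ x v ↔
      projH v = -(ContinuousLinearMap.adjoint (fderiv ℝ φ x)) (projV v) := by
  set A := fderiv ℝ φ x
  have key : ∀ τ : Euc m, (inner ℝ (graphMap A τ) v : ℝ)
      = inner ℝ τ (projH v + ContinuousLinearMap.adjoint A (projV v)) := by
    intro τ
    rw [WithLp.prod_inner_apply, inner_add_right]
    congr 1
    exact (ContinuousLinearMap.adjoint_inner_right A τ (projV v)).symm
  constructor
  · intro h
    have h2 : ∀ τ : Euc m,
        (inner ℝ τ (projH v + ContinuousLinearMap.adjoint A (projV v)) : ℝ) = 0 := by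
      intro τ
      rw [← key τ]
      exact (Submodule.mem_orthogonal _ v).1 h _ ⟨τ, rfl⟩
    have h3 := h2 (projH v + ContinuousLinearMap.adjoint A (projV v))
    rw [real_inner_self_eq_norm_sq] at h3
    have h4 : projH v + ContinuousLinearMap.adjoint A (projV v) = 0 :=
      norm_eq_zero.1 (sq_eq_zero_iff.1 h3)
    exact eq_neg_of_add_eq_zero_left h4
  · intro h
    rw [IsNormalAt, tangentSpace, Submodule.mem_orthogonal]
    rintro u ⟨τ, rfl⟩
    rw [key τ, h]
    simp

end AuxiliaryLemmas

lemma RCE_arith1 {c₀ s r xn hn : ℝ} (hc0 : 0 < c₀) (hc1 : c₀ ≤ 1/100)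
    (hc2 : c₀ ≤ (r - s)/2) (hxn : xn < s) (hhn : hn ≤ c₀ * c₀) : xn + hn < r := by
  nlinarith

lemma RCE_forward_arith {c₀ G a b : ℝ} (hc0 : 0 < c₀) (hc1 : c₀ ≤ 1/100) (ha : 0 ≤ a)
    (hb : 0 ≤ b) (hG : 0 ≤ G) (hba : b ≤ c₀ * a) (hstep : a ≤ c₀ * (c₀ * a) + G) :
    b^2 + a^2 ≤ (2*G)^2 := by
  have hcc : c₀ * c₀ ≤ 1/10000 := by nlinarith
  have h1 : c₀ * (c₀ * a) ≤ (1/10000) * a := by nlinarith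
  have ha15 : a ≤ (3/2) * G := by nlinarith
  nlinarith [mul_le_mul hba hba hb (mul_nonneg hc0.le ha),
    mul_le_mul ha15 ha15 ha (by linarith), mul_nonneg ha ha]

lemma RCE_pi_ball {c₀ s r xn bn d : ℝ} (hc0 : 0 < c₀) (hc1 : c₀ ≤ 1/100)
    (hc2 : c₀ ≤ (r - s)/2) (hs1 : s < 1) (hd0 : 0 ≤ d) (hd : d ≤ c₀ * s)
    (hxn : xn < s) (hbn : bn ≤ c₀ * (2*d)) : xn + bn < r := by
  nlinarith

lemma RCE_vnorm_arith {c₀ d w bw : ℝ} (hc0 : 0 < c₀) (hc1 : c₀ ≤ 1/100) (hd0 : 0 ≤ d)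
    (hw0 : 0 ≤ w) (hbw0 : 0 ≤ bw) (hbw : bw ≤ c₀ * w)
    (hw : w ≤ (1 + 2*(c₀*c₀))*d) : bw^2 + w^2 ≤ ((1 + 4*(c₀*c₀))*d)^2 := by
  have hcc : c₀ * c₀ ≤ 1/10000 := by nlinarith
  nlinarith [mul_le_mul hbw hbw hbw0 (mul_nonneg hc0.le hw0),
    mul_le_mul hw hw hw0 (by nlinarith), mul_nonneg hw0 hw0, mul_nonneg hd0 hd0,
    mul_nonneg (mul_nonneg hc0.le hc0.le) (mul_nonneg hd0 hd0)]

lemma RCE_vlt_arith {c₀ s d : ℝ} (hc0 : 0 < c₀) (hc1 : c₀ ≤ 1/100) (hc3 : c₀ ≤ (1 - s)/3)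
    (hs : 0 < s) (hd0 : 0 ≤ d) (hd : d ≤ c₀ * s) : (1 + 4*(c₀*c₀))*d < c₀ := by
  have hcc : c₀ * c₀ ≤ 1/10000 := by nlinarith
  have h1 : (1 + 4*(c₀*c₀))*d ≤ (1 + 4*(c₀*c₀))*(c₀*s) := by nlinarith
  have h2 : (1 + 4*(c₀*c₀))*s < 1 := by nlinarith
  calc (1 + 4*(c₀*c₀))*d ≤ (1 + 4*(c₀*c₀))*(c₀*s) := h1
    _ = c₀ * ((1 + 4*(c₀*c₀))*s) := by ring
    _ < c₀ * 1 := by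
        apply mul_lt_mul_of_pos_left h2 hc0
    _ = c₀ := mul_one c₀

lemma RCE_d2v_arith {q d a v : ℝ} (hq0 : 0 ≤ q) (hqq : q ≤ 1/10000) (hd0 : 0 ≤ d)
    (h26 : d - 2*q*d ≤ a) (hav : a ≤ v) : d ≤ 2*v := by
  nlinarith [mul_le_mul_of_nonneg_right hqq hd0]

lemma RCE_mmap_add {m n Q : ℕ} (f : Euc m → AQ (Euc n) Q) (φ : Euc m → Euc n) (x : Euc m)
    (v : EucP m n) : Mmap f (Phi φ x + v) = Theta (f (x + projH v)) (φ x + projV v) := rfl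

lemma RCE_tel {q p d A B C : ℝ} (hq0 : 0 ≤ q) (hqq : q ≤ 1/2) (hd0 : 0 ≤ d) (hp0 : 0 ≤ p)
    (h5 : C ≤ A + B) (hA : A ≤ (p*q)*d) (hB : B ≤ (2 - p)*d) : C ≤ (2 - p*q)*d := by
  nlinarith [mul_nonneg (mul_nonneg hp0 hq0) hd0, mul_nonneg hp0 hd0]

lemma RCE_tel2 {q p d A B C : ℝ} (hq0 : 0 ≤ q) (hqq : q ≤ 1/2) (hd0 : 0 ≤ d) (hp0 : 0 ≤ p)
    (h6 : C ≤ A + B) (hA : A ≤ (p*q)*d) (hB : B ≤ 2*q*(1 - p)*d) : C ≤ 2*q*(1 - p*q)*d := by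
  nlinarith [mul_nonneg (mul_nonneg hp0 hq0) hd0, mul_nonneg (mul_nonneg (mul_nonneg hp0 hq0) hq0) hd0]


set_option maxHeartbeats 1000000 in
/-- **Reparametrization: comparison estimate.** There is `c₀ > 0` (depending
on `m, n, Q, r-s, r/s`, equivalently on `m, n, Q, s, r`) such that, under hypothesis (H),
the well-defined normal field `N` satisfies, for every `x ∈ B_s`,
`(2√Q)⁻¹ |N(Φ(x))| ≤ 𝒢(f(x), Q⟦φ(x)⟧) ≤ 2√Q |N(Φ(x))|`. -/
theorem reparametrization_comparison_estimate
    (m n Q : ℕ) (hm : 0 < m) (hn : 0 < n) (hQ : 0 < Q)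
    (s r : ℝ) (hs : 0 < s) (hsr : s < r) (hr : r < 1) :
    ∃ c₀ : ℝ, 0 < c₀ ∧
      ∀ (φ : Euc m → Euc n) (f : Euc m → AQ (Euc n) Q) (L : ℝ),
        HypH s r c₀ L φ f →
        ∀ N : Euc m → AQ (EucP m n) Q,
          (∀ x ∈ ball (0 : Euc m) s, IsNField c₀ φ f x (N x)) →
          ∀ x ∈ ball (0 : Euc m) s,
            (1 / (2 * Real.sqrt Q)) * Gdist (N x) (AQmk (fun _ => (0 : EucP m n)))
                ≤ Gdist (f x) (AQmk (fun _ => φ x)) ∧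
            Gdist (f x) (AQmk (fun _ => φ x))
                ≤ 2 * Real.sqrt Q * Gdist (N x) (AQmk (fun _ => (0 : EucP m n))) := by

  refine ⟨min (1/100 : ℝ) (min ((r - s)/2) ((1 - s)/3)), ?_, ?_⟩
  · exact lt_min (by norm_num) (lt_min (by linarith) (by linarith))
  intro φ f L hH N hNf x hx
  set c₀ := min (1/100 : ℝ) (min ((r - s)/2) ((1 - s)/3)) with hc₀def
  have hc1 : c₀ ≤ 1/100 := min_le_left _ _
  have hc2 : c₀ ≤ (r - s)/2 := (min_le_right _ _).trans (min_le_left _ _)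
  have hc3 : c₀ ≤ (1 - s)/3 := (min_le_right _ _).trans (min_le_right _ _)
  have hc0 : 0 < c₀ := lt_min (by norm_num) (lt_min (by linarith) (by linarith))
  have hslt1 : s < 1 := lt_trans hsr hr
  have hq0 : (0:ℝ) ≤ c₀ * c₀ := mul_nonneg hc0.le hc0.le
  have hqq : c₀ * c₀ ≤ 1/10000 := by nlinarith
  obtain ⟨hL0, -, hLip, hC2, hC0⟩ := hH
  have hxr : x ∈ ball (0 : Euc m) r := ball_subset_ball hsr.le hx
  have hxs : ‖x‖ < s := mem_ball_zero_iff.1 hx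
  set A := fderiv ℝ φ x with hAdef
  set B := ContinuousLinearMap.adjoint A with hBdef
  have hA : ‖A‖ ≤ c₀ := by
    have h0 := hC2 x hx
    have h1 : 0 ≤ ‖φ x‖ := norm_nonneg _
    have h2 : 0 ≤ ‖fderiv ℝ (fderiv ℝ φ) x‖ := ContinuousLinearMap.opNorm_nonneg _
    linarith
  have hB : ‖B‖ ≤ c₀ := le_trans (le_of_eq (LinearIsometryEquiv.norm_map _ A)) hA
  have hLc : L ≤ c₀ := by
    have h0 := hC2 x hx
    have h1 : 0 ≤ ‖φ x‖ := norm_nonneg _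
    have h2 : 0 ≤ ‖fderiv ℝ (fderiv ℝ φ) x‖ := ContinuousLinearMap.opNorm_nonneg _
    have h3 : 0 ≤ ‖A‖ := norm_nonneg _
    linarith
  have hBapp : ∀ u : Euc n, ‖B u‖ ≤ c₀ * ‖u‖ := fun u =>
    (B.le_opNorm u).trans (mul_le_mul_of_nonneg_right hB (norm_nonneg u))
  have hsmall := hC0 x hx x hxr
  have hgx0 : 0 ≤ Gdist (f x) (AQmk fun _ => (0:Euc n)) := gdist_nonneg _ _
  have hφx : ‖φ x‖ ≤ c₀ * s := by linarith
  haveI : Nonempty (Fin Q) := ⟨⟨0, hQ⟩⟩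
  have hsheet : ∀ k : Fin Q, ‖(f x).out k - φ x‖ ≤ c₀ * s := by
    intro k
    have h1 : ‖(f x).out k - 0‖ ≤ Gdist (f x) (AQmk fun _ => (0:Euc n)) :=
      norm_out_sub_le _ _ k
    rw [sub_zero] at h1
    calc ‖(f x).out k - φ x‖ ≤ ‖(f x).out k‖ + ‖φ x‖ := norm_sub_le _ _
      _ ≤ c₀ * s := by linarith
  obtain ⟨lstar, -, hlstar⟩ := Finset.exists_max_image Finset.univ
    (fun k : Fin Q => ‖(f x).out k - φ x‖) Finset.univ_nonempty
  set d := ‖(f x).out lstar - φ x‖ with hddef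
  have hd0 : 0 ≤ d := norm_nonneg _
  have hds : d ≤ c₀ * s := hsheet lstar
  set G := Gdist (f x) (AQmk fun _ => φ x) with hGdef
  have hG0 : 0 ≤ G := gdist_nonneg _ _
  have hsq : 0 < Real.sqrt Q := Real.sqrt_pos.2 (by exact_mod_cast hQ)
  have hGd : G ≤ Real.sqrt Q * d := by
    rw [hGdef, gdist_const_eq]
    have h1 : (∑ l, ‖(f x).out l - φ x‖ ^ 2) ≤ (Q:ℝ) * d ^ 2 := by
      calc (∑ l, ‖(f x).out l - φ x‖ ^ 2) ≤ ∑ _l : Fin Q, d ^ 2 :=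
            Finset.sum_le_sum fun k _ =>
              pow_le_pow_left₀ (norm_nonneg _) (hlstar k (Finset.mem_univ k)) 2
        _ = (Q:ℝ) * d ^ 2 := by simp [mul_comm]
    calc Real.sqrt (∑ l, ‖(f x).out l - φ x‖ ^ 2)
        ≤ Real.sqrt ((Q:ℝ) * d ^ 2) := Real.sqrt_le_sqrt h1
      _ = Real.sqrt Q * d := by
          rw [Real.sqrt_mul (Nat.cast_nonneg Q), Real.sqrt_sq hd0]
  -- ### Forward inequality
  have hkey : ∀ l : Fin Q, ‖(N x).out l‖ ≤ 2 * G := by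
    intro l
    set v := (N x).out l with hvdef
    have hTv : 0 < Theta (N x) v := (theta_pos_iff _ _).2 ⟨l, rfl⟩
    have heq := hNf x hx v
    by_cases hcond : IsNormalAt φ x v ∧ ‖v‖ < c₀
    swap
    · rw [if_neg hcond] at heq; omega
    rw [if_pos hcond] at heq
    obtain ⟨hnorm, hlt⟩ := hcond
    have hpH : projH v = -(B (projV v)) := (isNormalAt_iff φ x v).1 hnorm
    have hpHnorm : ‖projH v‖ ≤ c₀ * ‖projV v‖ := by
      rw [hpH, norm_neg]; exact hBapp _
    have hpV_le : ‖projV v‖ ≤ ‖v‖ := by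
      apply RCE_le_of_sq_le_sq (norm_nonneg _) (norm_nonneg _)
      rw [normP_sq v]
      linarith [sq_nonneg ‖projH v‖]
    have hM : 0 < Mmap f (Phi φ x + v) := by rw [← heq]; exact hTv
    have hM2 : 0 < Theta (f (x + projH v)) (φ x + projV v) := by
      rw [RCE_mmap_add] at hM; exact hM
    obtain ⟨j, hj⟩ := (theta_pos_iff _ _).1 hM2
    have hx2r : x + projH v ∈ ball (0:Euc m) r := by
      rw [mem_ball_zero_iff]
      have h1 : ‖x + projH v‖ ≤ ‖x‖ + ‖projH v‖ := norm_add_le _ _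
      have h2 : ‖projH v‖ ≤ c₀ * c₀ :=
        hpHnorm.trans (mul_le_mul_of_nonneg_left (hpV_le.trans hlt.le) hc0.le)
      have h3 : ‖x‖ + ‖projH v‖ < r := RCE_arith1 hc0 hc1 hc2 hxs h2
      linarith
    obtain ⟨k, hk⟩ := exists_close_sheet hQ (f (x + projH v)) (f x) j
    have hGlip : Gdist (f (x + projH v)) (f x) ≤ L * ‖projH v‖ := by
      have h3 := hLip (x + projH v) hx2r x hxr
      rwa [dist_eq_norm, add_sub_cancel_left] at h3
    have houtk : ‖(f x).out k - φ x‖ ≤ G := norm_out_sub_le _ _ k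
    have htri : ‖projV v‖ ≤ ‖(φ x + projV v) - (f x).out k‖ + ‖(f x).out k - φ x‖ := by
      have h5 := dist_triangle (φ x + projV v) ((f x).out k) (φ x)
      simp only [dist_eq_norm] at h5
      calc ‖projV v‖ = ‖(φ x + projV v) - φ x‖ := by rw [add_sub_cancel_left]
        _ ≤ _ := h5
    rw [← hj] at htri
    have h6 : ‖(f (x + projH v)).out j - (f x).out k‖ ≤ c₀ * (c₀ * ‖projV v‖) :=
      hk.trans (hGlip.trans (mul_le_mul hLc hpHnorm (norm_nonneg _) hc0.le))
    have hstep : ‖projV v‖ ≤ c₀ * (c₀ * ‖projV v‖) + G := by linarith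
    apply RCE_le_of_sq_le_sq (norm_nonneg _) (by linarith)
    rw [normP_sq v]
    exact RCE_forward_arith hc0 hc1 (norm_nonneg _) (norm_nonneg _) hG0 hpHnorm hstep
  have hNle : Gdist (N x) (AQmk fun _ => (0:EucP m n)) ≤ 2 * Real.sqrt Q * G := by
    rw [gdist_const_eq]
    have h1 : (∑ l, ‖(N x).out l - 0‖ ^ 2) ≤ (Q:ℝ) * (2*G)^2 := by
      simp only [sub_zero]
      calc (∑ l, ‖(N x).out l‖ ^ 2) ≤ ∑ _l : Fin Q, (2*G)^2 :=
            Finset.sum_le_sum fun k _ => pow_le_pow_left₀ (norm_nonneg _) (hkey k) 2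
        _ = (Q:ℝ) * (2*G)^2 := by simp [mul_comm]
    calc Real.sqrt (∑ l, ‖(N x).out l - 0‖ ^ 2)
        ≤ Real.sqrt ((Q:ℝ) * (2*G)^2) := Real.sqrt_le_sqrt h1
      _ = Real.sqrt Q * (2*G) := by
          rw [Real.sqrt_mul (Nat.cast_nonneg Q), Real.sqrt_sq (by linarith)]
      _ = 2 * Real.sqrt Q * G := by ring
  have hforward : (1 / (2 * Real.sqrt Q)) * Gdist (N x) (AQmk fun _ => (0:EucP m n)) ≤ G := by
    have h2q : (0:ℝ) < 2 * Real.sqrt Q := by positivity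
    calc (1 / (2 * Real.sqrt Q)) * Gdist (N x) (AQmk fun _ => (0:EucP m n))
        ≤ (1 / (2 * Real.sqrt Q)) * (2 * Real.sqrt Q * G) :=
          mul_le_mul_of_nonneg_left hNle (by positivity)
      _ = G := by field_simp
  -- ### Reverse inequality
  set π : Euc n → Euc m := fun p => x - B (p - φ x) with hπdef
  have hπx : π (φ x) = x := by simp [hπdef, sub_self, map_zero, sub_zero]
  have hπlip : ∀ p q : Euc n, dist (π p) (π q) ≤ c₀ * ‖p - q‖ := by
    intro p q
    rw [dist_eq_norm]
    have hBe : B (q - p) = B (q - φ x) - B (p - φ x) := by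
      rw [← map_sub]
      congr 1
      abel
    have h1 : π p - π q = B (q - p) := by
      simp only [hπdef]
      rw [hBe]
      abel
    rw [h1, norm_sub_rev p q]
    exact hBapp _
  have hπball : ∀ p : Euc n, ‖p - φ x‖ ≤ 2 * d → π p ∈ ball (0:Euc m) r := by
    intro p hp
    rw [mem_ball_zero_iff]
    simp only [hπdef]
    have h1 : ‖x - B (p - φ x)‖ ≤ ‖x‖ + ‖B (p - φ x)‖ := norm_sub_le _ _
    have h2 : ‖B (p - φ x)‖ ≤ c₀ * (2*d) :=
      (hBapp _).trans (mul_le_mul_of_nonneg_left hp hc0.le)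
    have h3 : ‖x‖ + ‖B (p - φ x)‖ < r :=
      RCE_pi_ball hc0 hc1 hc2 hslt1 hd0 hds hxs h2
    linarith
  have hminex : ∀ p : Euc n, ∃ j : Fin Q, ∀ j' : Fin Q,
      ‖p - (f (π p)).out j‖ ≤ ‖p - (f (π p)).out j'‖ := by
    intro p
    obtain ⟨j, -, hj⟩ := Finset.exists_min_image Finset.univ
      (fun j : Fin Q => ‖p - (f (π p)).out j‖) Finset.univ_nonempty
    exact ⟨j, fun j' => hj j' (Finset.mem_univ _)⟩
  set step : Euc n → Euc n := fun p => (f (π p)).out (hminex p).choose with hstepdef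
  have hstep_mem : ∀ p, step p ∈ Set.range (f (π p)).out := fun p => ⟨_, rfl⟩
  have hstep_min : ∀ (p : Euc n) (j' : Fin Q), ‖p - step p‖ ≤ ‖p - (f (π p)).out j'‖ :=
    fun p => (hminex p).choose_spec
  have hstep_close : ∀ p q : Euc n, p ∈ Set.range (f (π q)).out →
      π q ∈ ball (0:Euc m) r → π p ∈ ball (0:Euc m) r →
      ‖step p - p‖ ≤ (c₀*c₀) * ‖p - q‖ := by
    intro p q hpmem hbq hbp
    obtain ⟨j, hj⟩ := hpmem
    obtain ⟨k, hk⟩ := exists_close_sheet hQ (f (π q)) (f (π p)) j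
    have h1 : Gdist (f (π q)) (f (π p)) ≤ L * dist (π q) (π p) := hLip _ hbq _ hbp
    have h2 : dist (π q) (π p) ≤ c₀ * ‖q - p‖ := hπlip q p
    have h3 : ‖p - step p‖ ≤ ‖p - (f (π p)).out k‖ := hstep_min p k
    rw [hj] at hk
    have h4 : L * dist (π q) (π p) ≤ c₀ * (c₀ * ‖q - p‖) :=
      mul_le_mul hLc h2 dist_nonneg hc0.le
    rw [norm_sub_rev]
    calc ‖p - step p‖ ≤ c₀ * (c₀ * ‖q - p‖) := h3.trans (hk.trans (h1.trans h4))
      _ = (c₀*c₀) * ‖p - q‖ := by rw [norm_sub_rev q p]; ring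
  set y : ℕ → Euc n := fun k =>
    Nat.rec (φ x) (fun k ih => if k = 0 then (f x).out lstar else step ih) k with hydef
  have hy0 : y 0 = φ x := rfl
  have hy1 : y 1 = (f x).out lstar := rfl
  have hysucc : ∀ k : ℕ, y (k+2) = step (y (k+1)) := fun k => rfl
  have hmem : ∀ k : ℕ, y (k+1) ∈ Set.range (f (π (y k))).out := by
    intro k
    match k with
    | 0 =>
      show y 1 ∈ Set.range (f (π (y 0))).out
      rw [hy1, hy0, hπx]
      exact ⟨lstar, rfl⟩
    | (k+1) =>
      rw [hysucc k]
      exact hstep_mem _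
  have hP : ∀ k : ℕ, ‖y (k+1) - y k‖ ≤ (c₀*c₀)^k * d ∧ ‖y k - φ x‖ ≤ 2*d ∧
      ‖y (k+1) - φ x‖ ≤ (2 - (c₀*c₀)^k) * d := by
    intro k
    induction k with
    | zero =>
      simp only [zero_add]
      refine ⟨?_, ?_, ?_⟩
      · rw [hy1, hy0, pow_zero, one_mul, ← hddef]
      · rw [hy0, sub_self, norm_zero]; linarith
      · rw [hy1, pow_zero, ← hddef]; linarith
    | succ k ih =>
      obtain ⟨ih1, ih2, ih3⟩ := ih
      have hpk : (0:ℝ) ≤ (c₀*c₀)^k := pow_nonneg hq0 k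
      have hk2d : ‖y (k+1) - φ x‖ ≤ 2*d := by
        have := mul_nonneg hpk hd0
        nlinarith
      have hcontr : ‖y (k+2) - y (k+1)‖ ≤ (c₀*c₀) * ‖y (k+1) - y k‖ := by
        rw [hysucc k]
        exact hstep_close (y (k+1)) (y k) (hmem k) (hπball _ ih2) (hπball _ hk2d)
      have hstep1 : ‖y (k+2) - y (k+1)‖ ≤ (c₀*c₀)^(k+1) * d := by
        calc ‖y (k+2) - y (k+1)‖ ≤ (c₀*c₀) * ((c₀*c₀)^k*d) :=
              hcontr.trans (mul_le_mul_of_nonneg_left ih1 hq0)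
          _ = (c₀*c₀)^(k+1)*d := by ring
      refine ⟨hstep1, hk2d, ?_⟩
      have h5 : ‖y (k+2) - φ x‖ ≤ ‖y (k+2) - y (k+1)‖ + ‖y (k+1) - φ x‖ := by
        have h5' := dist_triangle (y (k+2)) (y (k+1)) (φ x)
        simpa only [dist_eq_norm] using h5'
      rw [pow_succ]
      exact RCE_tel hq0 (by linarith) hd0 hpk h5 (by rw [← pow_succ]; exact hstep1) ih3
  have hyb : ∀ k, ‖y k - φ x‖ ≤ 2*d := fun k => (hP k).2.1
  have hT : ∀ k : ℕ, ‖y (k+1) - y 1‖ ≤ 2*(c₀*c₀)*(1 - (c₀*c₀)^k)*d := by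
    intro k
    induction k with
    | zero => simp
    | succ k ih =>
      have hpk : (0:ℝ) ≤ (c₀*c₀)^k := pow_nonneg hq0 k
      have h6 : ‖y (k+2) - y 1‖ ≤ ‖y (k+2) - y (k+1)‖ + ‖y (k+1) - y 1‖ := by
        have h6' := dist_triangle (y (k+2)) (y (k+1)) (y 1)
        simpa only [dist_eq_norm] using h6'
      have h7 := (hP (k+1)).1
      rw [pow_succ]
      exact RCE_tel2 hq0 (by linarith) hd0 hpk h6 (by rw [← pow_succ]; exact h7) ih
  have hcauchy : CauchySeq y := by
    apply cauchySeq_of_le_geometric (c₀*c₀) d (by linarith)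
    intro k
    rw [dist_eq_norm, norm_sub_rev]
    calc ‖y (k+1) - y k‖ ≤ (c₀*c₀)^k * d := (hP k).1
      _ = d * (c₀*c₀)^k := by ring
  obtain ⟨ybar, hybar⟩ := cauchySeq_tendsto_of_complete hcauchy
  have hybar2d : ‖ybar - φ x‖ ≤ 2*d := by
    have h9 : Filter.Tendsto (fun j => ‖y j - φ x‖) Filter.atTop (nhds ‖ybar - φ x‖) :=
      (hybar.sub tendsto_const_nhds).norm
    exact le_of_tendsto' h9 hyb
  have hybar_y1 : ‖ybar - y 1‖ ≤ 2*(c₀*c₀)*d := by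
    have h9 : Filter.Tendsto (fun k => ‖y (k+1) - y 1‖) Filter.atTop (nhds ‖ybar - y 1‖) :=
      ((hybar.comp (Filter.tendsto_add_atTop_nat 1)).sub tendsto_const_nhds).norm
    apply le_of_tendsto' h9
    intro k
    have h10 := hT k
    have h11 : (0:ℝ) ≤ (c₀*c₀)^k * d := mul_nonneg (pow_nonneg hq0 k) hd0
    nlinarith
  have hybar_d : d - 2*(c₀*c₀)*d ≤ ‖ybar - φ x‖ := by
    have h10 : d ≤ ‖y 1 - φ x‖ := by rw [hy1, ← hddef]
    have h11 : ‖y 1 - φ x‖ ≤ ‖y 1 - ybar‖ + ‖ybar - φ x‖ := by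
      have h11' := dist_triangle (y 1) ybar (φ x)
      simpa only [dist_eq_norm] using h11'
    have h12 : ‖y 1 - ybar‖ = ‖ybar - y 1‖ := norm_sub_rev _ _
    linarith
  have hπybar : π ybar ∈ ball (0:Euc m) r := hπball _ hybar2d
  obtain ⟨j₀, -, hj₀min⟩ := Finset.exists_min_image Finset.univ
    (fun j : Fin Q => ‖ybar - (f (π ybar)).out j‖) Finset.univ_nonempty
  have hj₀ : (f (π ybar)).out j₀ = ybar := by
    have hkey2 : ∀ k : ℕ, ‖ybar - (f (π ybar)).out j₀‖ ≤
        ‖ybar - y (k+2)‖ + (c₀*c₀) * ‖y (k+1) - ybar‖ := by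
      intro k
      obtain ⟨j, hj⟩ := hmem (k+1)
      obtain ⟨k', hk'⟩ := exists_close_sheet hQ (f (π (y (k+1)))) (f (π ybar)) j
      rw [hj] at hk'
      have h12 : Gdist (f (π (y (k+1)))) (f (π ybar)) ≤ L * dist (π (y (k+1))) (π ybar) :=
        hLip _ (hπball _ (hyb (k+1))) _ hπybar
      have h13 : dist (π (y (k+1))) (π ybar) ≤ c₀ * ‖y (k+1) - ybar‖ := hπlip _ _
      have h14 : ‖y (k+2) - (f (π ybar)).out k'‖ ≤ (c₀*c₀) * ‖y (k+1) - ybar‖ := by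
        refine hk'.trans (h12.trans ?_)
        calc L * dist (π (y (k+1))) (π ybar) ≤ c₀ * (c₀ * ‖y (k+1) - ybar‖) :=
              mul_le_mul hLc h13 dist_nonneg hc0.le
          _ = (c₀*c₀) * ‖y (k+1) - ybar‖ := by ring
      have h15 : ‖ybar - (f (π ybar)).out j₀‖ ≤ ‖ybar - (f (π ybar)).out k'‖ :=
        hj₀min k' (Finset.mem_univ _)
      have h16 : ‖ybar - (f (π ybar)).out k'‖ ≤
          ‖ybar - y (k+2)‖ + ‖y (k+2) - (f (π ybar)).out k'‖ := by
        have h16' := dist_triangle ybar (y (k+2)) ((f (π ybar)).out k')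
        simpa only [dist_eq_norm] using h16'
      linarith
    have h17 : Filter.Tendsto
        (fun k : ℕ => ‖ybar - y (k+2)‖ + (c₀*c₀) * ‖y (k+1) - ybar‖)
        Filter.atTop (nhds 0) := by
      have t1 : Filter.Tendsto (fun k : ℕ => ‖ybar - y (k+2)‖) Filter.atTop (nhds 0) := by
        have hy2 : Filter.Tendsto (fun k : ℕ => y (k+2)) Filter.atTop (nhds ybar) :=
          hybar.comp (Filter.tendsto_add_atTop_nat 2)
        have t1' := (Filter.Tendsto.sub (tendsto_const_nhds (x := ybar)) hy2).norm
        simpa using t1'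
      have t2 : Filter.Tendsto (fun k : ℕ => (c₀*c₀) * ‖y (k+1) - ybar‖)
          Filter.atTop (nhds 0) := by
        have hy1t : Filter.Tendsto (fun k : ℕ => y (k+1)) Filter.atTop (nhds ybar) :=
          hybar.comp (Filter.tendsto_add_atTop_nat 1)
        have t2' := ((Filter.Tendsto.sub hy1t (tendsto_const_nhds (x := ybar))).norm).const_mul (c₀*c₀)
        simpa using t2'
      simpa using t1.add t2
    have h18 : ‖ybar - (f (π ybar)).out j₀‖ ≤ 0 := ge_of_tendsto' h17 hkey2
    have h19 : ybar - (f (π ybar)).out j₀ = 0 :=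
      norm_eq_zero.1 (le_antisymm h18 (norm_nonneg _))
    exact (sub_eq_zero.1 h19).symm
  set v : EucP m n := mkP (-(B (ybar - φ x))) (ybar - φ x) with hvdef2
  have hpHv : projH v = -(B (ybar - φ x)) := rfl
  have hpVv : projV v = ybar - φ x := rfl
  have hvnormal : IsNormalAt φ x v :=
    (isNormalAt_iff φ x v).2 (by rw [hpHv, hpVv])
  have hw1 : ‖ybar - φ x‖ ≤ (1 + 2*(c₀*c₀))*d := by
    have h21 : ‖ybar - φ x‖ ≤ ‖ybar - y 1‖ + ‖y 1 - φ x‖ := by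
      have h21' := dist_triangle ybar (y 1) (φ x)
      simpa only [dist_eq_norm] using h21'
    have h22 : ‖y 1 - φ x‖ = d := by rw [hy1, ← hddef]
    linarith
  have hvnorm_le : ‖v‖ ≤ (1 + 4*(c₀*c₀))*d := by
    apply RCE_le_of_sq_le_sq (norm_nonneg _) (mul_nonneg (by linarith) hd0)
    rw [normP_sq v, hpHv, hpVv, norm_neg]
    exact RCE_vnorm_arith hc0 hc1 hd0 (norm_nonneg _) (norm_nonneg _) (hBapp _) hw1
  have hvlt : ‖v‖ < c₀ :=
    lt_of_le_of_lt hvnorm_le (RCE_vlt_arith hc0 hc1 hc3 hs hd0 hds)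
  have heqv := hNf x hx v
  rw [if_pos ⟨hvnormal, hvlt⟩] at heqv
  have hMv : 0 < Mmap f (Phi φ x + v) := by
    rw [RCE_mmap_add]
    have hbase : x + projH v = π ybar := by
      rw [hpHv]
      simp only [hπdef]
      abel
    have hvert : φ x + projV v = ybar := by
      rw [hpVv]; abel
    rw [hbase, hvert]
    exact (theta_pos_iff _ _).2 ⟨j₀, hj₀⟩
  have hTv2 : 0 < Theta (N x) v := by rw [heqv]; exact hMv
  obtain ⟨l₀, hl₀⟩ := (theta_pos_iff _ _).1 hTv2
  have hNge : ‖v‖ ≤ Gdist (N x) (AQmk fun _ => (0:EucP m n)) := by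
    have h25 := norm_out_sub_le (N x) (0:EucP m n) l₀
    rwa [sub_zero, hl₀] at h25
  have hpVlev : ‖projV v‖ ≤ ‖v‖ := by
    apply RCE_le_of_sq_le_sq (norm_nonneg _) (norm_nonneg _)
    rw [normP_sq v]
    linarith [sq_nonneg ‖projH v‖]
  have hd2v : d ≤ 2*‖v‖ := by
    have h26 : d - 2*(c₀*c₀)*d ≤ ‖projV v‖ := by rw [hpVv]; exact hybar_d
    exact RCE_d2v_arith hq0 hqq hd0 h26 hpVlev
  have hreverse : G ≤ 2 * Real.sqrt Q * Gdist (N x) (AQmk fun _ => (0:EucP m n)) := by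
    calc G ≤ Real.sqrt Q * d := hGd
      _ ≤ Real.sqrt Q * (2*‖v‖) := mul_le_mul_of_nonneg_left hd2v hsq.le
      _ ≤ Real.sqrt Q * (2*Gdist (N x) (AQmk fun _ => (0:EucP m n))) :=
          mul_le_mul_of_nonneg_left (by linarith) hsq.le
      _ = 2 * Real.sqrt Q * Gdist (N x) (AQmk fun _ => (0:EucP m n)) := by ring
  exact ⟨hforward, hreverse⟩
end
end

section
/- The graph of f stays close to Σ along normal directions: There exist a geometric constant C = C(m,n) and, for every 0 < s < r < 1, the following holds. Let c₀ > 0 satisfy c₀ ≤ (r−s)/2 and C c₀² ≤ 1 − (s/r)², let φ : B_s ⊂ ℝᵐ → ℝⁿ be C³ and f : B_r → 𝒜_Q(ℝⁿ) be Lipschitz, satisfying ‖φ‖_{C²} + Lip(f) ≤ c₀ and ‖φ‖_{C⁰} + ‖f‖_{C⁰} ≤ c₀ s. Suppose x ∈ B_s, v ∈ ℝ^{m+n} is orthogonal to T_{Φ(x)}Σ, and Φ(x) + v = (y, u) with y ∈ B_r and u ∈ spt(f(y)). Then |v| ≤ c₀ r. -/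
open scoped BigOperators
open Metric MeasureTheory Asymptotics
open scoped Classical

noncomputable section

lemma out_AQmk_zero {n Q : ℕ} :
    (AQmk (fun _ => (0 : Euc n)) : AQ (Euc n) Q).out = fun _ => (0 : Euc n) := by
  obtain ⟨σ, hσ⟩ := Quotient.mk_out (s := QPerm (Euc n) Q) (fun _ => (0 : Euc n))
  exact hσ

lemma norm_le_Gdist_zero {n Q : ℕ} (T : AQ (Euc n) Q) {w : Euc n}
    (hw : w ∈ AQspt T) : ‖w‖ ≤ Gdist T (AQmk (fun _ => (0 : Euc n))) := by
  obtain ⟨l, rfl⟩ := hw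
  unfold Gdist Gfun
  rw [out_AQmk_zero]
  simp only [sub_zero]
  rw [ciInf_const]
  have h1 : ‖T.out l‖ ^ 2 ≤ ∑ j, ‖T.out j‖ ^ 2 :=
    Finset.single_le_sum (f := fun j => ‖T.out j‖ ^ 2) (fun i _ => sq_nonneg _)
      (Finset.mem_univ l)
  calc ‖T.out l‖ = Real.sqrt (‖T.out l‖ ^ 2) := (Real.sqrt_sq (norm_nonneg _)).symm
    _ ≤ Real.sqrt (∑ j, ‖T.out j‖ ^ 2) := Real.sqrt_le_sqrt h1


lemma arith_close_aux (s r c₀ a b : ℝ) (hs : 0 < s) (hsr : s < r)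
    (hc₀ : 0 < c₀) (hC : 1 * c₀ ^ 2 ≤ 1 - (s / r) ^ 2)
    (ha : 0 ≤ a) (hb : 0 ≤ b) (ha1 : a ≤ c₀ ^ 2 * s) (hb1 : b ≤ c₀ * s) :
    a ^ 2 + b ^ 2 ≤ (c₀ * r) ^ 2 := by
  have hr : 0 < r := hs.trans hsr
  have hsr' : (s / r) ^ 2 * r ^ 2 = s ^ 2 := by field_simp
  have h1 : c₀ ^ 2 * r ^ 2 + s ^ 2 ≤ r ^ 2 := by nlinarith [sq_nonneg r]
  have hs2 : s ^ 2 ≤ r ^ 2 := by nlinarith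
  have h2 : c₀ ^ 2 * s ^ 2 ≤ c₀ ^ 2 * r ^ 2 :=
    mul_le_mul_of_nonneg_left hs2 (sq_nonneg c₀)
  have h3 : c₀ ^ 2 * s ^ 2 + s ^ 2 ≤ r ^ 2 := by linarith
  nlinarith [sq_nonneg c₀, mul_pos hc₀ hc₀]

lemma sq_le_imp_le (x c : ℝ) (hx : 0 ≤ x) (hc : 0 ≤ c) (h : x ^ 2 ≤ c ^ 2) : x ≤ c := by
  nlinarith

/-- **The graph of `f` stays close to `Σ` along normal directions.** There is
a geometric constant `C = C(m,n)` such that for all `0 < s < r < 1` and all `c₀ > 0` with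
`c₀ ≤ (r-s)/2` and `C c₀² ≤ 1 - (s/r)²`, under hypothesis (H): if `x ∈ B_s`, `v ⊥ T_{Φ(x)}Σ`
and `Φ(x) + v = (y, u)` with `y ∈ B_r` and `u ∈ spt(f(y))`, then `|v| ≤ c₀ r`. -/
theorem graph_close_to_manifold_along_normals
    (m n Q : ℕ) (hm : 0 < m) (hn : 0 < n) (hQ : 0 < Q) :
    ∃ C : ℝ, 0 < C ∧
      ∀ s r : ℝ, 0 < s → s < r → r < 1 →
      ∀ c₀ : ℝ, 0 < c₀ → c₀ ≤ (r - s) / 2 → C * c₀ ^ 2 ≤ 1 - (s / r) ^ 2 →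
      ∀ (φ : Euc m → Euc n) (f : Euc m → AQ (Euc n) Q) (L : ℝ),
        HypH s r c₀ L φ f →
        ∀ x ∈ ball (0 : Euc m) s, ∀ v : EucP m n, IsNormalAt φ x v →
          ∀ (y : Euc m) (w : Euc n),
            Phi φ x + v = mkP y w → y ∈ ball (0 : Euc m) r → w ∈ AQspt (f y) →
            ‖v‖ ≤ c₀ * r := by
  refine ⟨1, one_pos, ?_⟩
  intro s r hs hsr hr1 c₀ hc₀ hc₀sr hC φ f L hH x hx v hv y w hvy hy hw
  obtain ⟨hL, hφ3, hfLip, h4, h5⟩ := hH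
  set A := fderiv ℝ φ x with hA
  -- components of v
  have hfst : x + v.fst = y := by
    have := congrArg (fun ξ : EucP m n => ξ.fst) hvy
    simpa [Phi, mkP, WithLp.add_fst] using this
  have hsnd : φ x + v.snd = w := by
    have := congrArg (fun ξ : EucP m n => ξ.snd) hvy
    simpa [Phi, mkP, WithLp.add_snd] using this
  -- orthogonality
  have horthog : ∀ τ : Euc m, (inner ℝ τ v.fst : ℝ) + inner ℝ (A τ) v.snd = 0 := by
    intro τ
    have hmem : graphMap A τ ∈ tangentSpace φ x := ⟨τ, rfl⟩
    have h0 := (Submodule.mem_orthogonal _ v).mp hv _ hmem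
    rw [WithLp.prod_inner_apply] at h0
    have e1 : (graphMap A τ).fst = τ := rfl
    have e2 : (graphMap A τ).snd = A τ := rfl
    exact h0
  -- operator norm bound
  have hA_le : ‖A‖ ≤ c₀ := by
    have := h4 x hx
    have n1 := norm_nonneg (φ x)
    have n2 := norm_nonneg (fderiv ℝ (fderiv ℝ φ) x)
    linarith
  -- vertical bound
  have hw_le : ‖w‖ ≤ Gdist (f y) (AQmk (fun _ => (0 : Euc n))) :=
    norm_le_Gdist_zero (f y) hw
  have hφf := h5 x hx y hy
  have hsnd_le : ‖v.snd‖ ≤ c₀ * s := by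
    have hv2 : v.snd = w - φ x := by rw [← hsnd]; abel
    rw [hv2]
    calc ‖w - φ x‖ ≤ ‖w‖ + ‖φ x‖ := norm_sub_le _ _
      _ ≤ c₀ * s := by linarith
  -- horizontal bound
  have hfst_sq : ‖v.fst‖ ^ 2 ≤ ‖A‖ * ‖v.fst‖ * ‖v.snd‖ := by
    have h0 := horthog v.fst
    rw [real_inner_self_eq_norm_sq] at h0
    have h1 : |(inner ℝ (A v.fst) v.snd : ℝ)| ≤ ‖A v.fst‖ * ‖v.snd‖ :=
      abs_real_inner_le_norm _ _
    have h2 : ‖A v.fst‖ ≤ ‖A‖ * ‖v.fst‖ := A.le_opNorm _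
    have h3 : -(inner ℝ (A v.fst) v.snd : ℝ) ≤ ‖A v.fst‖ * ‖v.snd‖ := by
      have := neg_abs_le (inner ℝ (A v.fst) v.snd : ℝ)
      linarith
    nlinarith [norm_nonneg v.snd]
  have hfst_le : ‖v.fst‖ ≤ c₀ ^ 2 * s := by
    by_cases h0 : ‖v.fst‖ = 0
    · rw [h0]; positivity
    · have hpos : 0 < ‖v.fst‖ := lt_of_le_of_ne (norm_nonneg _) (Ne.symm h0)
      have : ‖v.fst‖ ^ 2 ≤ c₀ * ‖v.fst‖ * (c₀ * s) := by
        calc ‖v.fst‖ ^ 2 ≤ ‖A‖ * ‖v.fst‖ * ‖v.snd‖ := hfst_sq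
          _ ≤ c₀ * ‖v.fst‖ * (c₀ * s) := by
              apply mul_le_mul
              · exact mul_le_mul_of_nonneg_right hA_le (norm_nonneg _)
              · exact hsnd_le
              · exact norm_nonneg _
              · positivity
      nlinarith
  -- conclude
  have hnorm : ‖v‖ ^ 2 = ‖v.fst‖ ^ 2 + ‖v.snd‖ ^ 2 := WithLp.prod_norm_sq_eq_of_L2 v
  have hrpos : (0 : ℝ) < r := hs.trans hsr
  have hsq : ‖v‖ ^ 2 ≤ (c₀ * r) ^ 2 := by
    rw [hnorm]
    exact arith_close_aux s r c₀ _ _ hs hsr hc₀ hC (norm_nonneg _) (norm_nonneg _)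
      hfst_le hsnd_le
  exact sq_le_imp_le _ _ (norm_nonneg v) (by positivity) hsq
end
end
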